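/- arXiv:2602.03259 — 5 statements merged into one kernel-verified Lean document; each statement's English description precedes it below -/
import Mathlib

section
/- For 3 ≤ n ≤ 8, the strong odd chromatic number of the wheel W_n = C_n ∨ K_1 equals n + 1. -/
open SimpleGraph

/-- A coloring `φ` of the vertices of `G` is a strong odd coloring if it is proper and,
for every vertex `v` and every color `c`, the number of neighbors of `v` colored `c`
is either zero or odd. -/
def IsStrongOddColoring {V α : Type*} (G : SimpleGraph V) (φ : V → α) : Prop :=
  (∀ u v : V, G.Adj u v → φ u ≠ φ v) ∧
  ∀ (v : V) (c : α),
    {u : V | G.Adj v u ∧ φ u = c}.ncard = 0 ∨ Odd {u : V | G.Adj v u ∧ φ u = c}.ncard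

/-- The strong odd chromatic number: the least `k` such that `G` admits a strong odd
coloring with `k` colors. -/
noncomputable def strongOddChromaticNumber {V : Type*} (G : SimpleGraph V) : ℕ :=
  sInf {k : ℕ | ∃ φ : V → Fin k, IsStrongOddColoring G φ}

/-- The join `G ∨ H` of two graphs: disjoint copies of `G` and `H` together with all
edges between them. -/
def joinGraph {V W : Type*} (G : SimpleGraph V) (H : SimpleGraph W) :
    SimpleGraph (V ⊕ W) where
  Adj x y :=
    match x, y with
    | Sum.inl a, Sum.inl b => G.Adj a b
    | Sum.inl _, Sum.inr _ => True
    | Sum.inr _, Sum.inl _ => True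
    | Sum.inr a, Sum.inr b => H.Adj a b
  symm := ⟨by rintro (a | a) (b | b) h <;> first | exact h.symm | trivial⟩
  loopless := ⟨by rintro (a | a) h <;> first | exact G.irrefl h | exact H.irrefl h⟩

/-- The wheel graph `W_n = C_n ∨ K_1`. -/
def wheelGraph (n : ℕ) : SimpleGraph (Fin n ⊕ Fin 1) :=
  joinGraph (cycleGraph n) (⊥ : SimpleGraph (Fin 1))

/-- `G_n = C_n ∨ K̄_2`; the two vertices of `K̄_2` are `x_n = Sum.inr 0` and
`y_n = Sum.inr 1`. -/
def cycleJoinTwo (n : ℕ) : SimpleGraph (Fin n ⊕ Fin 2) :=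
  joinGraph (cycleGraph n) (⊥ : SimpleGraph (Fin 2))

/-- The one point union of graphs `G` and `H`, obtained by identifying the vertex
`a` of `G` with the vertex `b` of `H` (the identified vertex is `Sum.inl a`). -/
def onePointUnion {V W : Type*} (G : SimpleGraph V) (H : SimpleGraph W) (a : V) (b : W) :
    SimpleGraph (V ⊕ {w : W // w ≠ b}) where
  Adj x y :=
    match x, y with
    | Sum.inl u, Sum.inl v => G.Adj u v
    | Sum.inl u, Sum.inr v => u = a ∧ H.Adj b v.1
    | Sum.inr v, Sum.inl u => u = a ∧ H.Adj b v.1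
    | Sum.inr u, Sum.inr v => H.Adj u.1 v.1
  symm := ⟨by
    rintro (u | u) (v | v) h
    · exact h.symm
    · exact h
    · exact h
    · exact h.symm⟩
  loopless := ⟨by
    rintro (u | u) h
    · exact G.irrefl h
    · exact H.irrefl h⟩

/-- `I_y(G_m, G_n)`: the one point union of `G_m = C_m ∨ K̄_2` and `G_n = C_n ∨ K̄_2`
obtained by identifying the vertices `y_m` and `y_n`. -/
def Iy (m n : ℕ) :
    SimpleGraph ((Fin m ⊕ Fin 2) ⊕ {w : Fin n ⊕ Fin 2 // w ≠ Sum.inr 1}) :=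
  onePointUnion (cycleJoinTwo m) (cycleJoinTwo n) (Sum.inr 1) (Sum.inr 1)

/-- A planar embedding of a graph `G`: an injective placement of the vertices in the
plane together with, for each edge, an arc (injective path) joining the images of its
endpoints, such that arcs do not pass through images of other vertices and two arcs of
distinct edges meet only in common endpoints. -/
structure PlanarEmbedding {V : Type*} (G : SimpleGraph V) where
  vmap : V → ℝ × ℝ
  vmap_inj : Function.Injective vmap
  arc : ∀ u v : V, G.Adj u v → Path (vmap u) (vmap v)
  arc_symm : ∀ (u v : V) (h : G.Adj u v), arc v u h.symm = (arc u v h).symm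
  arc_inj : ∀ (u v : V) (h : G.Adj u v), Function.Injective (arc u v h)
  arc_vertex : ∀ (u v : V) (h : G.Adj u v) (w : V),
    vmap w ∈ Set.range (arc u v h) → w = u ∨ w = v
  arc_disjoint : ∀ (u v u' v' : V) (h : G.Adj u v) (h' : G.Adj u' v'),
    s(u, v) ≠ s(u', v') →
    Set.range (arc u v h) ∩ Set.range (arc u' v' h') ⊆
      ({vmap u, vmap v} ∩ {vmap u', vmap v'} : Set (ℝ × ℝ))

/-- A graph is planar if it admits a planar embedding. -/
def IsPlanar {V : Type*} (G : SimpleGraph V) : Prop :=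
  Nonempty (PlanarEmbedding G)

section Aux

lemma injective_isStrongOddColoring {V α : Type*} (G : SimpleGraph V) (φ : V → α)
    (hφ : Function.Injective φ) : IsStrongOddColoring G φ := by
  constructor
  · intro u v h hc
    exact G.ne_of_adj h (hφ hc)
  · intro v c
    have hs : {u : V | G.Adj v u ∧ φ u = c}.Subsingleton := by
      intro a ha b hb
      exact hφ (ha.2.trans hb.2.symm)
    rcases hs.eq_empty_or_singleton with h | ⟨x, h⟩
    · left; simp [h]
    · right; rw [h, Set.ncard_singleton]; exact odd_one

lemma geom_aux (m : ℕ) (h8 : m ≤ 5) (i j t : Fin (m + 3)) (hij : i ≠ j) (hit : i ≠ t)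
    (hjt : j ≠ t)
    (k1 : ¬(cycleGraph (m + 3)).Adj i j ∧
      ∀ x : Fin (m + 3), ¬((cycleGraph (m + 3)).Adj x i ∧ (cycleGraph (m + 3)).Adj x j))
    (k2 : ¬(cycleGraph (m + 3)).Adj i t ∧
      ∀ x : Fin (m + 3), ¬((cycleGraph (m + 3)).Adj x i ∧ (cycleGraph (m + 3)).Adj x t))
    (k3 : ¬(cycleGraph (m + 3)).Adj j t ∧
      ∀ x : Fin (m + 3), ¬((cycleGraph (m + 3)).Adj x j ∧ (cycleGraph (m + 3)).Adj x t)) :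
    False := by
  interval_cases m <;> revert i j t <;> decide

lemma wheel_lower (m : ℕ) (h8 : m ≤ 5) (k : ℕ) (φ : Fin (m + 3) ⊕ Fin 1 → Fin k)
    (hφ : IsStrongOddColoring (wheelGraph (m + 3)) φ) : m + 4 ≤ k := by
  obtain ⟨hp, ho⟩ := hφ
  -- hub color differs from all rim colors
  have hhub : ∀ i : Fin (m + 3), φ (Sum.inl i) ≠ φ (Sum.inr 0) := by
    intro i
    exact hp (Sum.inl i) (Sum.inr 0) trivial
  -- rim colors pairwise distinct
  have hinj : ∀ i j : Fin (m + 3), φ (Sum.inl i) = φ (Sum.inl j) → i = j := by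
    intro i j hij
    by_contra hne
    -- key geometric property of the color class of c := φ (Sum.inl i)
    have key : ∀ u v : Fin (m + 3),
        φ (Sum.inl u) = φ (Sum.inl i) → φ (Sum.inl v) = φ (Sum.inl i) → u ≠ v →
        ¬(cycleGraph (m + 3)).Adj u v ∧
        ∀ x : Fin (m + 3), ¬((cycleGraph (m + 3)).Adj x u ∧ (cycleGraph (m + 3)).Adj x v) := by
      intro u v hu hv huv
      constructor
      · intro hadj
        exact hp (Sum.inl u) (Sum.inl v) hadj (hu.trans hv.symm)
      · rintro x ⟨hxu, hxv⟩
        have hsub : {y : Fin (m + 3) ⊕ Fin 1 |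
            (wheelGraph (m + 3)).Adj (Sum.inl x) y ∧ φ y = φ (Sum.inl i)} ⊆
            {Sum.inl (x - 1), Sum.inl (x + 1)} := by
          rintro (w | w) ⟨hadj, hcol⟩
          · have hadj' : (cycleGraph (m + 3)).Adj x w := hadj
            rw [cycleGraph_adj] at hadj'
            have hw : w = x - 1 ∨ w = x + 1 := by
              rcases hadj' with h | h
              · left; rw [← h]; abel
              · right; rw [← h]; abel
            rcases hw with rfl | rfl
            · exact Set.mem_insert _ _
            · exact Set.mem_insert_of_mem _ rfl
          · exfalso
            have hw0 : w = 0 := Subsingleton.elim _ _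
            exact hhub i (hw0 ▸ hcol).symm
        have hle : {y : Fin (m + 3) ⊕ Fin 1 |
            (wheelGraph (m + 3)).Adj (Sum.inl x) y ∧ φ y = φ (Sum.inl i)}.ncard ≤ 2 := by
          calc _ ≤ ({Sum.inl (x - 1), Sum.inl (x + 1)} :
                Set (Fin (m + 3) ⊕ Fin 1)).ncard := Set.ncard_le_ncard hsub (Set.toFinite _)
            _ ≤ 2 := by
                apply le_trans (Set.ncard_insert_le _ _)
                simp
        have hge : 2 ≤ {y : Fin (m + 3) ⊕ Fin 1 |
            (wheelGraph (m + 3)).Adj (Sum.inl x) y ∧ φ y = φ (Sum.inl i)}.ncard := by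
          have hsub2 : ({Sum.inl u, Sum.inl v} : Set (Fin (m + 3) ⊕ Fin 1)) ⊆
              {y : Fin (m + 3) ⊕ Fin 1 |
                (wheelGraph (m + 3)).Adj (Sum.inl x) y ∧ φ y = φ (Sum.inl i)} := by
            rintro y (rfl | rfl)
            · exact ⟨hxu, hu⟩
            · exact ⟨hxv, hv⟩
          have := Set.ncard_le_ncard hsub2 (Set.toFinite _)
          rwa [Set.ncard_pair (by simpa using huv)] at this
        rcases ho (Sum.inl x) (φ (Sum.inl i)) with h | h
        · omega
        · obtain ⟨r, hr⟩ := h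
          omega
    -- the hub sees the color class, so its size is odd, hence ≥ 3
    have himg : {y : Fin (m + 3) ⊕ Fin 1 |
        (wheelGraph (m + 3)).Adj (Sum.inr 0) y ∧ φ y = φ (Sum.inl i)}
        = Sum.inl '' {u : Fin (m + 3) | φ (Sum.inl u) = φ (Sum.inl i)} := by
      ext y
      cases y with
      | inl u =>
        simp only [Set.mem_setOf_eq, Set.mem_image]
        constructor
        · rintro ⟨-, hcol⟩; exact ⟨u, hcol, rfl⟩
        · rintro ⟨a, ha, hay⟩
          cases hay
          exact ⟨trivial, ha⟩
      | inr w =>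
        simp only [Set.mem_setOf_eq, Set.mem_image]
        constructor
        · rintro ⟨hadj, -⟩; exact hadj.elim
        · rintro ⟨a, -, h⟩; exact (Sum.inl_ne_inr h).elim
    have hcard : {y : Fin (m + 3) ⊕ Fin 1 |
        (wheelGraph (m + 3)).Adj (Sum.inr 0) y ∧ φ y = φ (Sum.inl i)}.ncard
        = {u : Fin (m + 3) | φ (Sum.inl u) = φ (Sum.inl i)}.ncard := by
      rw [himg, Set.ncard_image_of_injective _ Sum.inl_injective]
    have hge2 : 2 ≤ {u : Fin (m + 3) | φ (Sum.inl u) = φ (Sum.inl i)}.ncard := by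
      have hsub2 : ({i, j} : Set (Fin (m + 3))) ⊆
          {u : Fin (m + 3) | φ (Sum.inl u) = φ (Sum.inl i)} := by
        rintro y (rfl | rfl)
        · exact rfl
        · exact hij.symm
      have := Set.ncard_le_ncard hsub2 (Set.toFinite _)
      rwa [Set.ncard_pair hne] at this
    have hge3 : 3 ≤ {u : Fin (m + 3) | φ (Sum.inl u) = φ (Sum.inl i)}.ncard := by
      rcases ho (Sum.inr 0) (φ (Sum.inl i)) with h | h
      · omega
      · obtain ⟨r, hr⟩ := h
        omega
    -- extract a third element
    have hnotsub : ¬ {u : Fin (m + 3) | φ (Sum.inl u) = φ (Sum.inl i)} ⊆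
        ({i, j} : Set (Fin (m + 3))) := by
      intro hsub
      have := Set.ncard_le_ncard hsub (Set.toFinite _)
      rw [Set.ncard_pair hne] at this
      omega
    obtain ⟨t, htA, htn⟩ := Set.not_subset.mp hnotsub
    have hti : t ≠ i := fun h => htn (by simp [h])
    have htj : t ≠ j := fun h => htn (by simp [h])
    exact geom_aux m h8 i j t hne (Ne.symm hti) (Ne.symm htj)
      (key i j rfl hij.symm hne)
      (key i t rfl htA (Ne.symm hti))
      (key j t hij.symm htA (Ne.symm htj))
  have hinjφ : Function.Injective φ := by
    rintro (a | a) (b | b) h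
    · rw [hinj a b h]
    · exact absurd h (by simpa [Subsingleton.elim b (0 : Fin 1)] using hhub a)
    · exact absurd h.symm (by simpa [Subsingleton.elim a (0 : Fin 1)] using hhub b)
    · rw [Subsingleton.elim a b]
  have := Fintype.card_le_of_injective φ hinjφ
  simp at this
  omega

end Aux

theorem stmt_2' (n : ℕ) (h3 : 3 ≤ n) (h8 : n ≤ 8) :
    strongOddChromaticNumber (wheelGraph n) = n + 1 := by
  obtain ⟨m, rfl⟩ : ∃ m, n = m + 3 := ⟨n - 3, by omega⟩
  apply le_antisymm
  · apply Nat.sInf_le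
    refine ⟨fun v => (finSumFinEquiv : Fin (m + 3) ⊕ Fin 1 ≃ Fin (m + 3 + 1)) v, ?_⟩
    exact injective_isStrongOddColoring _ _ (Equiv.injective _)
  · apply le_csInf
    · exact ⟨m + 3 + 1, fun v => (finSumFinEquiv : Fin (m + 3) ⊕ Fin 1 ≃ Fin (m + 3 + 1)) v,
        injective_isStrongOddColoring _ _ (Equiv.injective _)⟩
    · rintro k ⟨φ, hφ⟩
      have := wheel_lower m (by omega) k φ hφ
      omega

/-- For `3 ≤ n ≤ 8`, the strong odd chromatic number of the wheel `W_n = C_n ∨ K_1`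
equals `n + 1`. -/
theorem stmt_2 (n : ℕ) (h3 : 3 ≤ n) (h8 : n ≤ 8) :
    strongOddChromaticNumber (wheelGraph n) = n + 1 := stmt_2' n h3 h8
end

section
/- If n > 8, n ≠ 14, n ≠ 15, and n ≡ 0, 2 or 4 (mod 6), then the strong odd chromatic number of the wheel W_n = C_n ∨ K_1 equals 5. -/
open SimpleGraph

section StmtFourAux

lemma stmt4_mod_two_n {n Q : ℕ} (h : Q < 2*n) : (Q < n ∧ Q % n = Q) ∨ Q % n + n = Q := by
  rcases Nat.lt_or_ge Q n with h'|h'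
  · exact Or.inl ⟨h', Nat.mod_eq_of_lt h'⟩
  · right
    have hn : 0 < n := by omega
    rw [Nat.mod_eq_sub_mod h', Nat.mod_eq_of_lt (by omega)]
    omega

lemma stmt4_succ_mod_inj {n x y : ℕ} (hx : x < n) (hy : y < n)
    (h : (x+1) % n = (y+1) % n) : x = y := by
  have a1 := stmt4_mod_two_n (show x + 1 < 2*n by omega)
  have a2 := stmt4_mod_two_n (show y + 1 < 2*n by omega)
  omega

lemma stmt4_cycle_adj_val {n : ℕ} (hn : 2 < n) (u v : Fin n) :
    (cycleGraph n).Adj u v ↔ (v.val = (u.val + 1) % n ∨ u.val = (v.val + 1) % n) := by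
  rw [cycleGraph_adj', Fin.sub_def, Fin.sub_def]
  simp only []
  have h1 := stmt4_mod_two_n (show (n - v.val) + u.val < 2*n by omega)
  have h2 := stmt4_mod_two_n (show (n - u.val) + v.val < 2*n by omega)
  have h3 := stmt4_mod_two_n (show u.val + 1 < 2*n by omega)
  have h4 := stmt4_mod_two_n (show v.val + 1 < 2*n by omega)
  have hu := u.isLt
  have hv := v.isLt
  omega

/-- The block coloring of the cycle: `0123` repeated `a` times followed by `012` blocks. -/
def stmt4_wcol (a i : ℕ) : ℕ := if i < 4*a then i % 4 else (i - 4*a) % 3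

lemma stmt4_wcol_lt (a i : ℕ) : stmt4_wcol a i < 4 := by
  unfold stmt4_wcol; split_ifs <;> omega

lemma stmt4_wcol_step {a b n i : ℕ} (hn : n = 4*a+3*b) (ha : 1 ≤ a) (hi : i < n) :
    stmt4_wcol a i ≠ stmt4_wcol a ((i+1) % n) := by
  subst hn
  rcases Nat.lt_or_ge (i+1) (4*a+3*b) with h|h
  · rw [Nat.mod_eq_of_lt h]
    unfold stmt4_wcol; split_ifs <;> omega
  · have hieq : i + 1 = 4*a+3*b := by omega
    rw [hieq, Nat.mod_self]
    unfold stmt4_wcol; split_ifs <;> omega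

lemma stmt4_wcol_step2 {a b n i : ℕ} (hn : n = 4*a+3*b) (ha : 1 ≤ a) (hi : i < n) :
    stmt4_wcol a i ≠ stmt4_wcol a ((i+2) % n) := by
  subst hn
  rcases Nat.lt_or_ge (i+2) (4*a+3*b) with h|h
  · rw [Nat.mod_eq_of_lt h]
    unfold stmt4_wcol; split_ifs <;> omega
  · have h2 := stmt4_mod_two_n (show i + 2 < 2*(4*a+3*b) by omega)
    have hQ : (i+2) % (4*a+3*b) = i + 2 - (4*a+3*b) := by omega
    rw [hQ]
    unfold stmt4_wcol; split_ifs <;> omega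

lemma stmt4_count_mod4 (a c : ℕ) (hc : c < 4) :
    ((Finset.range (4*a)).filter (fun i => i % 4 = c)).card = a := by
  induction a with
  | zero => simp
  | succ k ih =>
    have hset : (Finset.range (4*(k+1))).filter (fun i => i % 4 = c)
        = insert (4*k+c) ((Finset.range (4*k)).filter (fun i => i % 4 = c)) := by
      ext i
      simp only [Finset.mem_filter, Finset.mem_range, Finset.mem_insert]
      omega
    rw [hset, Finset.card_insert_of_notMem
      (by simp only [Finset.mem_filter, Finset.mem_range]; omega), ih]

lemma stmt4_count_mod3 (b c : ℕ) (hc : c < 3) :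
    ((Finset.range (3*b)).filter (fun i => i % 3 = c)).card = b := by
  induction b with
  | zero => simp
  | succ k ih =>
    have hset : (Finset.range (3*(k+1))).filter (fun i => i % 3 = c)
        = insert (3*k+c) ((Finset.range (3*k)).filter (fun i => i % 3 = c)) := by
      ext i
      simp only [Finset.mem_filter, Finset.mem_range, Finset.mem_insert]
      omega
    rw [hset, Finset.card_insert_of_notMem
      (by simp only [Finset.mem_filter, Finset.mem_range]; omega), ih]

lemma stmt4_count_wcol (a b c : ℕ) (hc : c < 4) :
    ((Finset.range (4*a+3*b)).filter (fun i => stmt4_wcol a i = c)).card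
      = if c = 3 then a else a + b := by
  rw [Finset.range_add, Finset.filter_union, Finset.card_union_of_disjoint, Finset.filter_map,
    Finset.card_map]
  · have h1 : (Finset.range (4*a)).filter (fun i => stmt4_wcol a i = c)
        = (Finset.range (4*a)).filter (fun i => i % 4 = c) := by
      apply Finset.filter_congr
      intro i hi
      simp only [Finset.mem_range] at hi
      simp [stmt4_wcol, if_pos hi]
    have h2 : (Finset.range (3*b)).filter ((fun i => stmt4_wcol a i = c) ∘ (addLeftEmbedding (4*a)))
        = (Finset.range (3*b)).filter (fun j => j % 3 = c) := by
      apply Finset.filter_congr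
      intro j _
      simp only [Function.comp_apply, addLeftEmbedding_apply]
      have hj : ¬ (4*a + j < 4*a) := by omega
      simp [stmt4_wcol, hj]
    rw [h1, h2, stmt4_count_mod4 a c hc]
    by_cases h3 : c = 3
    · subst h3
      have he : (Finset.range (3*b)).filter (fun j => j % 3 = 3) = ∅ := by
        apply Finset.filter_eq_empty_iff.mpr
        intro j _
        omega
      simp [he]
    · rw [stmt4_count_mod3 b c (by omega), if_neg h3]
  · apply Finset.disjoint_filter_filter
    simp only [Finset.disjoint_left, Finset.mem_range, Finset.mem_map, addLeftEmbedding_apply]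
    rintro x hx ⟨y, _, rfl⟩
    omega

lemma stmt4_subsingleton_ncard {α : Type*} {S : Set α} (h : S.Subsingleton) :
    S.ncard = 0 ∨ Odd S.ncard := by
  rcases h.eq_empty_or_singleton with rfl | ⟨a, rfl⟩
  · left; simp
  · right; rw [Set.ncard_singleton]; exact odd_one

lemma stmt4_card_filter_fin (n : ℕ) (p : ℕ → Prop) [DecidablePred p] :
    (Finset.univ.filter (fun i : Fin n => p i.val)).card = ((Finset.range n).filter p).card := by
  apply Finset.card_bij (fun i _ => i.val)
  · intro i hi
    simp only [Finset.mem_filter, Finset.mem_univ, true_and] at hi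
    simp only [Finset.mem_filter, Finset.mem_range]
    exact ⟨i.isLt, hi⟩
  · intro i _ j _ h
    exact Fin.val_injective h
  · intro x hx
    simp only [Finset.mem_filter, Finset.mem_range] at hx
    exact ⟨⟨x, hx.1⟩, by simp [hx.2], rfl⟩

lemma stmt4_wheel_adj_inl_inl {n : ℕ} {i j : Fin n} :
    (wheelGraph n).Adj (Sum.inl i) (Sum.inl j) ↔ (cycleGraph n).Adj i j := Iff.rfl

lemma stmt4_wheel_adj_inl_inr {n : ℕ} {i : Fin n} {j : Fin 1} :
    (wheelGraph n).Adj (Sum.inl i) (Sum.inr j) := trivial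

lemma stmt4_wheel_adj_inr_inl {n : ℕ} {i : Fin n} {j : Fin 1} :
    (wheelGraph n).Adj (Sum.inr j) (Sum.inl i) := trivial

lemma stmt4_wheel_adj_inr_inr {n : ℕ} {j j' : Fin 1} :
    ¬ (wheelGraph n).Adj (Sum.inr j) (Sum.inr j') := fun h => h

/-- The strong odd coloring of the wheel with 5 colors. -/
def stmt4_coloring (n a : ℕ) : (Fin n ⊕ Fin 1) → Fin 5 := fun x =>
  match x with
  | Sum.inl i => ⟨stmt4_wcol a i.val, by have := stmt4_wcol_lt a i.val; omega⟩
  | Sum.inr _ => ⟨4, by omega⟩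

lemma stmt4_wheel_upper {n a b : ℕ} (hn : n = 4*a+3*b) (h9 : 8 < n)
    (ha2 : a % 2 = 1) (hb2 : b % 2 = 0) :
    ∃ φ : (Fin n ⊕ Fin 1) → Fin 5, IsStrongOddColoring (wheelGraph n) φ := by
  classical
  have ha : 1 ≤ a := by omega
  have hn2 : 2 < n := by omega
  refine ⟨stmt4_coloring n a, ?_, ?_⟩
  · -- properness
    rintro (i | j) (i' | j') hadj
    · rw [stmt4_wheel_adj_inl_inl, stmt4_cycle_adj_val hn2] at hadj
      show (⟨stmt4_wcol a i.val, _⟩ : Fin 5) ≠ ⟨stmt4_wcol a i'.val, _⟩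
      simp only [ne_eq, Fin.mk.injEq]
      rcases hadj with h | h
      · rw [h]
        exact stmt4_wcol_step hn ha i.isLt
      · rw [h]
        exact (stmt4_wcol_step hn ha i'.isLt).symm
    · show (⟨stmt4_wcol a i.val, _⟩ : Fin 5) ≠ ⟨4, _⟩
      simp only [ne_eq, Fin.mk.injEq]
      have := stmt4_wcol_lt a i.val
      omega
    · show (⟨4, _⟩ : Fin 5) ≠ ⟨stmt4_wcol a i'.val, _⟩
      simp only [ne_eq, Fin.mk.injEq]
      have := stmt4_wcol_lt a i'.val
      omega
    · exact absurd hadj stmt4_wheel_adj_inr_inr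
  · intro v c
    rcases v with i | j
    · -- cycle vertex: the relevant set is a subsingleton
      apply stmt4_subsingleton_ncard
      rintro u ⟨huadj, huc⟩ u' ⟨hu'adj, hu'c⟩
      rcases u with j | j <;> rcases u' with j' | j'
      · -- both cycle vertices
        rw [stmt4_wheel_adj_inl_inl, stmt4_cycle_adj_val hn2] at huadj hu'adj
        have h1 : stmt4_wcol a j.val = c.val := congrArg Fin.val huc
        have h2 : stmt4_wcol a j'.val = c.val := congrArg Fin.val hu'c
        rcases huadj with h | h <;> rcases hu'adj with h' | h'
        · exact congrArg _ (Fin.ext (h.trans h'.symm))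
        · exfalso
          have hx : j.val = (j'.val + 2) % n := by
            rw [h, h', Nat.mod_add_mod]
          apply stmt4_wcol_step2 hn ha j'.isLt
          rw [← hx]
          exact h2.trans h1.symm
        · exfalso
          have hx : j'.val = (j.val + 2) % n := by
            rw [h', h, Nat.mod_add_mod]
          apply stmt4_wcol_step2 hn ha j.isLt
          rw [← hx]
          exact h1.trans h2.symm
        · exact congrArg _ (Fin.ext (stmt4_succ_mod_inj j.isLt j'.isLt (h.symm.trans h')))
      · exfalso
        have h1 : stmt4_wcol a j.val = c.val := congrArg Fin.val huc
        have h2 : (4 : ℕ) = c.val := congrArg Fin.val hu'c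
        have := stmt4_wcol_lt a j.val
        omega
      · exfalso
        have h1 : stmt4_wcol a j'.val = c.val := congrArg Fin.val hu'c
        have h2 : (4 : ℕ) = c.val := congrArg Fin.val huc
        have := stmt4_wcol_lt a j'.val
        omega
      · have : j = j' := Fin.ext (by have := j.isLt; have := j'.isLt; omega)
        rw [this]
    · -- hub
      have hSet : {u | (wheelGraph n).Adj (Sum.inr j) u ∧ stmt4_coloring n a u = c}
          = Sum.inl '' {i : Fin n | stmt4_wcol a i.val = c.val} := by
        ext u
        rcases u with i | j'
        · simp only [Set.mem_setOf_eq, Set.mem_image]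
          constructor
          · rintro ⟨_, hc⟩
            exact ⟨i, congrArg Fin.val hc, rfl⟩
          · rintro ⟨i', hi', hii⟩
            have : i' = i := Sum.inl_injective hii
            subst this
            exact ⟨stmt4_wheel_adj_inr_inl, Fin.ext hi'⟩
        · simp only [Set.mem_setOf_eq, Set.mem_image]
          constructor
          · rintro ⟨hadj, -⟩
            exact absurd hadj stmt4_wheel_adj_inr_inr
          · rintro ⟨i', -, hii⟩
            exact absurd hii (by simp)
      rw [hSet, Set.ncard_image_of_injective _ Sum.inl_injective]
      have hcount : {i : Fin n | stmt4_wcol a i.val = c.val}.ncard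
          = ((Finset.range n).filter (fun x => stmt4_wcol a x = c.val)).card := by
        rw [Set.ncard_eq_toFinset_card', Set.toFinset_setOf]
        exact stmt4_card_filter_fin n (fun x => stmt4_wcol a x = c.val)
      rw [hcount]
      by_cases hc4 : c.val = 4
      · left
        apply Finset.card_eq_zero.mpr
        apply Finset.filter_eq_empty_iff.mpr
        intro x _
        have := stmt4_wcol_lt a x
        omega
      · right
        have hc : c.val < 4 := by have := c.isLt; omega
        rw [hn, stmt4_count_wcol a b c.val hc, Nat.odd_iff]
        split_ifs <;> omega

lemma stmt4_wheel_lower {n k : ℕ} (h9 : 8 < n) (heven : n % 2 = 0) (hk : k ≤ 4)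
    (φ : (Fin n ⊕ Fin 1) → Fin k) (hco : IsStrongOddColoring (wheelGraph n) φ) : False := by
  classical
  obtain ⟨hproper, hodd⟩ := hco
  have hn2 : 2 < n := by omega
  set hub : Fin n ⊕ Fin 1 := Sum.inr 0 with hhub
  set N : Fin k → Finset (Fin n ⊕ Fin 1) :=
    fun c => Finset.univ.filter (fun u => (wheelGraph n).Adj hub u ∧ φ u = c) with hNdef
  have hN : ∀ c, {u | (wheelGraph n).Adj hub u ∧ φ u = c}.ncard = (N c).card := by
    intro c
    rw [show {u | (wheelGraph n).Adj hub u ∧ φ u = c} = ↑(N c) by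
      ext u; simp [hNdef]]
    exact Set.ncard_coe_finset _
  have hadjcard : (Finset.univ.filter (fun u => (wheelGraph n).Adj hub u)).card = n := by
    have heq : Finset.univ.filter (fun u => (wheelGraph n).Adj hub u)
        = Finset.univ.map ⟨Sum.inl, Sum.inl_injective⟩ := by
      ext u
      rcases u with i | j
      · exact iff_of_true
          (Finset.mem_filter.mpr ⟨Finset.mem_univ _, stmt4_wheel_adj_inr_inl⟩)
          (Finset.mem_map_of_mem _ (Finset.mem_univ i))
      · constructor
        · intro h; exact absurd (Finset.mem_filter.mp h).2 stmt4_wheel_adj_inr_inr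
        · intro h
          obtain ⟨i, -, hh⟩ := Finset.mem_map.mp h
          exact absurd hh (by simp)
    rw [heq, Finset.card_map, Finset.card_univ, Fintype.card_fin]
  have hsum : ∑ c : Fin k, (N c).card = n := by
    have h' := Finset.card_eq_sum_card_fiberwise
      (f := φ) (s := Finset.univ.filter (fun u => (wheelGraph n).Adj hub u))
      (t := Finset.univ) (fun x _ => Finset.mem_univ _)
    calc ∑ c : Fin k, (N c).card
        = ∑ c : Fin k, ((Finset.univ.filter (fun u => (wheelGraph n).Adj hub u)).filter
            (fun u => φ u = c)).card := by
          apply Finset.sum_congr rfl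
          intro c _
          congr 1
          ext u
          simp [hNdef, Finset.mem_filter, and_assoc]
      _ = (Finset.univ.filter (fun u => (wheelGraph n).Adj hub u)).card := h'.symm
      _ = n := hadjcard
  set T : Finset (Fin k) := Finset.univ.filter (fun c => (N c).card ≠ 0) with hTdef
  have h1 : ∀ c : Fin k, (N c).card % 2 = if (N c).card ≠ 0 then 1 else 0 := by
    intro c
    have hx := hodd hub c
    rw [hN c] at hx
    rcases hx with h0 | ho
    · simp [h0]
    · have h2 := Nat.odd_iff.mp ho
      have h3 : (N c).card ≠ 0 := by omega
      simp [h3, h2]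
  have hTcard2 : T.card % 2 = 0 := by
    have e1 : n % 2 = (∑ c : Fin k, (N c).card) % 2 := by rw [hsum]
    rw [Finset.sum_nat_mod] at e1
    have e2 : ∑ c : Fin k, (N c).card % 2 = T.card := by
      rw [hTdef, Finset.card_filter]
      exact Finset.sum_congr rfl (fun c _ => h1 c)
    rw [e2] at e1
    omega
  have hhubT : φ hub ∉ T := by
    simp only [hTdef, Finset.mem_filter, Finset.mem_univ, true_and, ne_eq, not_not]
    apply Finset.card_eq_zero.mpr
    apply Finset.filter_eq_empty_iff.mpr
    rintro u - ⟨hadj, heq⟩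
    exact hproper hub u hadj heq.symm
  have hmemT : ∀ i : Fin n, φ (Sum.inl i) ∈ T := by
    intro i
    simp only [hTdef, Finset.mem_filter, Finset.mem_univ, true_and, ne_eq]
    exact Finset.card_ne_zero_of_mem (a := Sum.inl i)
      (Finset.mem_filter.mpr ⟨Finset.mem_univ _, stmt4_wheel_adj_inr_inl, rfl⟩)
  have hT2 : T.card = 2 := by
    have hsub : T ⊆ Finset.univ.erase (φ hub) := fun c hc =>
      Finset.mem_erase.mpr ⟨fun h => hhubT (h ▸ hc), Finset.mem_univ _⟩
    have hle := Finset.card_le_card hsub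
    rw [Finset.card_erase_of_mem (Finset.mem_univ _), Finset.card_univ, Fintype.card_fin] at hle
    have hpos : 0 < T.card := Finset.card_pos.mpr ⟨_, hmemT ⟨0, by omega⟩⟩
    omega
  set i0 : Fin n := ⟨0, by omega⟩
  set i1 : Fin n := ⟨1, by omega⟩
  set i2 : Fin n := ⟨2, by omega⟩
  have hadj10 : (cycleGraph n).Adj i1 i0 := by
    rw [stmt4_cycle_adj_val hn2]
    right
    show (1 : ℕ) = (0 + 1) % n
    rw [Nat.mod_eq_of_lt (by omega)]
  have hadj12 : (cycleGraph n).Adj i1 i2 := by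
    rw [stmt4_cycle_adj_val hn2]
    left
    show (2 : ℕ) = (1 + 1) % n
    rw [Nat.mod_eq_of_lt (by omega)]
  have hp0 : φ (Sum.inl i1) ≠ φ (Sum.inl i0) :=
    hproper _ _ (stmt4_wheel_adj_inl_inl.mpr hadj10)
  have hp2 : φ (Sum.inl i1) ≠ φ (Sum.inl i2) :=
    hproper _ _ (stmt4_wheel_adj_inl_inl.mpr hadj12)
  have heq02 : φ (Sum.inl i0) = φ (Sum.inl i2) := by
    obtain ⟨x, y, hxy, hTxy⟩ := Finset.card_eq_two.mp hT2
    have m0 := hmemT i0; have m1 := hmemT i1; have m2 := hmemT i2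
    rw [hTxy, Finset.mem_insert, Finset.mem_singleton] at m0 m1 m2
    rcases m0 with h0 | h0 <;> rcases m1 with h1 | h1 <;> rcases m2 with h2 | h2 <;>
      first
        | exact h0.trans h2.symm
        | exact absurd (h1.trans h0.symm) hp0
        | exact absurd (h1.trans h2.symm) hp2
  set S : Set (Fin n ⊕ Fin 1) :=
    {u | (wheelGraph n).Adj (Sum.inl i1) u ∧ φ u = φ (Sum.inl i0)} with hSdef
  have hS : S = {Sum.inl i0, Sum.inl i2} := by
    ext u
    simp only [hSdef, Set.mem_setOf_eq, Set.mem_insert_iff, Set.mem_singleton_iff]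
    constructor
    · rintro ⟨hadj, hc⟩
      rcases u with j | j
      · rw [stmt4_wheel_adj_inl_inl, stmt4_cycle_adj_val hn2] at hadj
        rcases hadj with h | h
        · right
          have : j.val = 2 := by
            rw [h]
            show (1 + 1) % n = 2
            rw [Nat.mod_eq_of_lt (by omega)]
          exact congrArg _ (Fin.ext this)
        · left
          have h1n : (1 : ℕ) = (0 + 1) % n := by rw [Nat.mod_eq_of_lt (by omega)]
          have : j.val = 0 := stmt4_succ_mod_inj j.isLt (by omega) (h.symm.trans h1n)
          exact congrArg _ (Fin.ext this)
      · exfalso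
        have hj : (Sum.inr j : Fin n ⊕ Fin 1) = hub := by
          rw [hhub]
          have : j = 0 := Fin.ext (by have := j.isLt; omega)
          rw [this]
        rw [hj] at hc
        exact hhubT (hc ▸ hmemT i0)
    · rintro (rfl | rfl)
      · exact ⟨stmt4_wheel_adj_inl_inl.mpr hadj10, rfl⟩
      · exact ⟨stmt4_wheel_adj_inl_inl.mpr hadj12, heq02.symm⟩
  have hcard : S.ncard = 2 := by
    rw [hS]
    apply Set.ncard_pair
    intro h
    have := congrArg Fin.val (Sum.inl_injective h)
    simp only [i0, i2] at this
    omega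
  have hfin := hodd (Sum.inl i1) (φ (Sum.inl i0))
  rw [show {u | (wheelGraph n).Adj (Sum.inl i1) u ∧ φ u = φ (Sum.inl i0)} = S from rfl,
    hcard] at hfin
  rcases hfin with h | h
  · omega
  · rw [Nat.odd_iff] at h
    omega

end StmtFourAux

/-- If `n > 8`, `n ≠ 14`, `n ≠ 15` and `n ≡ 0, 2` or `4 (mod 6)`, then the strong odd
chromatic number of the wheel `W_n = C_n ∨ K_1` equals `5`. -/
theorem stmt_4 (n : ℕ) (hn : 8 < n) (h14 : n ≠ 14) (h15 : n ≠ 15)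
    (hmod : n % 6 = 0 ∨ n % 6 = 2 ∨ n % 6 = 4) :
    strongOddChromaticNumber (wheelGraph n) = 5 := by
  obtain ⟨a, b, hab, ha2, hb2⟩ : ∃ a b : ℕ, n = 4*a+3*b ∧ a % 2 = 1 ∧ b % 2 = 0 := by
    rcases hmod with h|h|h
    · exact ⟨3, (n-12)/3, by omega, by omega, by omega⟩
    · exact ⟨5, (n-20)/3, by omega, by omega, by omega⟩
    · exact ⟨1, (n-4)/3, by omega, by omega, by omega⟩
  have h5mem : 5 ∈ {k : ℕ | ∃ φ : (Fin n ⊕ Fin 1) → Fin k,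
      IsStrongOddColoring (wheelGraph n) φ} :=
    stmt4_wheel_upper hab hn ha2 hb2
  have hlb : ∀ m ∈ {k : ℕ | ∃ φ : (Fin n ⊕ Fin 1) → Fin k,
      IsStrongOddColoring (wheelGraph n) φ}, 5 ≤ m := by
    intro m hm
    by_contra hlt
    push_neg at hlt
    obtain ⟨φ, hφ⟩ := hm
    exact stmt4_wheel_lower hn (by omega) (by omega) φ hφ
  exact le_antisymm (Nat.sInf_le h5mem) (le_csInf ⟨5, h5mem⟩ hlb)
end

section
/- The strong odd chromatic number of the wheel W_14 = C_14 ∨ K_1 equals 7. -/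
open SimpleGraph

-- auxiliary material

instance joinGraph.adjDecidable {V W : Type*} (G : SimpleGraph V) (H : SimpleGraph W)
    [DecidableRel G.Adj] [DecidableRel H.Adj] : DecidableRel (joinGraph G H).Adj
  | Sum.inl a, Sum.inl b => inferInstanceAs (Decidable (G.Adj a b))
  | Sum.inl _, Sum.inr _ => inferInstanceAs (Decidable True)
  | Sum.inr _, Sum.inl _ => inferInstanceAs (Decidable True)
  | Sum.inr a, Sum.inr b => inferInstanceAs (Decidable (H.Adj a b))

instance wheelGraph.adjDecidable (n : ℕ) : DecidableRel (wheelGraph n).Adj :=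
  inferInstanceAs (DecidableRel (joinGraph (cycleGraph n) (⊥ : SimpleGraph (Fin 1))).Adj)

lemma ncard_filter {V : Type*} [Fintype V] (p : V → Prop) [DecidablePred p] :
    {u | p u}.ncard = (Finset.univ.filter p).card := by
  rw [← Set.ncard_coe_finset]; congr 1; ext u; simp

lemma iso_iff {V α : Type*} [Fintype V] [DecidableEq α]
    (G : SimpleGraph V) [DecidableRel G.Adj] (φ : V → α) :
    IsStrongOddColoring G φ ↔
      ((∀ u v, G.Adj u v → φ u ≠ φ v) ∧
       ∀ v c, (Finset.univ.filter fun u => G.Adj v u ∧ φ u = c).card = 0 ∨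
              Odd (Finset.univ.filter fun u => G.Adj v u ∧ φ u = c).card) := by
  unfold IsStrongOddColoring
  simp_rw [ncard_filter]

/-- pushing a strong odd coloring along an injection of color sets -/
lemma iso_castLE {V : Type*} (G : SimpleGraph V) {k m : ℕ} (hkm : k ≤ m) (φ : V → Fin k)
    (h : IsStrongOddColoring G φ) :
    IsStrongOddColoring G (fun v => Fin.castLE hkm (φ v)) := by
  obtain ⟨h1, h2⟩ := h
  constructor
  · intro u v huv hc
    exact h1 u v huv (Fin.castLE_injective hkm hc)
  · intro v c
    by_cases hc : (c : ℕ) < k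
    · have he : {u | G.Adj v u ∧ Fin.castLE hkm (φ u) = c}
          = {u | G.Adj v u ∧ φ u = ⟨(c : ℕ), hc⟩} := by
        ext u
        simp only [Set.mem_setOf_eq, and_congr_right_iff]
        intro _
        constructor
        · intro hh; exact Fin.ext (by simpa [Fin.ext_iff] using hh)
        · intro hh; exact Fin.ext (by simpa [Fin.ext_iff] using hh)
      rw [he]
      exact h2 v ⟨(c : ℕ), hc⟩
    · left
      have he : {u | G.Adj v u ∧ Fin.castLE hkm (φ u) = c} = (∅ : Set V) := by
        ext u
        simp only [Set.mem_setOf_eq, Set.mem_empty_iff_false, iff_false, not_and]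
        intro _ hh
        exact hc (hh ▸ (φ u).isLt)
      rw [he, Set.ncard_empty]

set_option maxRecDepth 10000 in
lemma triples_meet : ∀ i j x : Fin 14, x ∈ ({i, i+1, i+2} : Finset (Fin 14)) →
    x ∈ ({j, j+1, j+2} : Finset (Fin 14)) →
    (j = i ∨ j = i + 1 ∨ j = i + 2 ∨ i = j + 1 ∨ i = j + 2) := by decide

set_option maxRecDepth 10000 in
lemma triples_card : ∀ i : Fin 14, ({i, i+1, i+2} : Finset (Fin 14)).card = 3 := by decide

lemma card_le_four (S : Finset (Fin 14)) (hS : ∀ i ∈ S, i + 1 ∉ S ∧ i + 2 ∉ S) :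
    S.card ≤ 4 := by
  have hdisj : ∀ i ∈ S, ∀ j ∈ S, i ≠ j →
      Disjoint ({i, i+1, i+2} : Finset (Fin 14)) ({j, j+1, j+2} : Finset (Fin 14)) := by
    intro i hi j hj hne
    rw [Finset.disjoint_left]
    intro x hx hx'
    rcases triples_meet i j x hx hx' with h | h | h | h | h
    · exact hne h.symm
    · exact (hS i hi).1 (h ▸ hj)
    · exact (hS i hi).2 (h ▸ hj)
    · exact (hS j hj).1 (h ▸ hi)
    · exact (hS j hj).2 (h ▸ hi)
  have hcard := Finset.card_biUnion hdisj
  have hle : (S.biUnion fun i => ({i, i+1, i+2} : Finset (Fin 14))).card ≤ 14 := by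
    have := Finset.card_le_univ (S.biUnion fun i => ({i, i+1, i+2} : Finset (Fin 14)))
    simpa using this
  rw [hcard] at hle
  have hsum : ∑ i ∈ S, ({i, i+1, i+2} : Finset (Fin 14)).card = 3 * S.card := by
    rw [Finset.sum_congr rfl fun i _ => triples_card i]
    simp [Finset.sum_const, mul_comm]
  omega

set_option maxRecDepth 4000 in
lemma cyc_adj_succ : ∀ i : Fin 14, (cycleGraph 14).Adj i (i + 1) := by decide

set_option maxRecDepth 4000 in
lemma cyc_adj_iff : ∀ i j : Fin 14, (cycleGraph 14).Adj (i + 1) j ↔ (j = i ∨ j = i + 2) := by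
  decide

set_option maxRecDepth 4000 in
lemma ne_add_two : ∀ i : Fin 14, Sum.inl i ≠ (Sum.inl (i + 2) : Fin 14 ⊕ Fin 1) := by decide

set_option maxRecDepth 4000 in
lemma fin6_cases : ∀ x : Fin 6, x = 0 ∨ x = 1 ∨ x = 2 ∨ x = 3 ∨ x = 4 ∨ x = 5 := by decide

/-- no strong odd coloring of the wheel `W₁₄` with 6 colors -/
lemma no_six_coloring : ∀ φ : Fin 14 ⊕ Fin 1 → Fin 6,
    ¬ IsStrongOddColoring (wheelGraph 14) φ := by
  intro φ hφ
  rw [iso_iff] at hφ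
  obtain ⟨hp, ho⟩ := hφ
  set f : Fin 14 → Fin 6 := fun i => φ (Sum.inl i) with hf
  set h : Fin 6 := φ (Sum.inr 0) with hh
  have hA : ∀ i : Fin 14, f i ≠ h := fun i => hp (Sum.inl i) (Sum.inr 0) trivial
  have hB : ∀ i : Fin 14, f i ≠ f (i + 1) := fun i =>
    hp (Sum.inl i) (Sum.inl (i + 1)) (cyc_adj_succ i)
  have hC : ∀ i : Fin 14, f i ≠ f (i + 2) := by
    intro i hcon
    have hset : (Finset.univ.filter
        fun u => (wheelGraph 14).Adj (Sum.inl (i + 1)) u ∧ φ u = f i)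
        = {Sum.inl i, Sum.inl (i + 2)} := by
      ext u
      rcases u with j | k
      · simp only [Finset.mem_filter, Finset.mem_univ, true_and, Finset.mem_insert,
          Finset.mem_singleton]
        have hadj : (wheelGraph 14).Adj (Sum.inl (i + 1)) (Sum.inl j)
            ↔ (cycleGraph 14).Adj (i + 1) j := Iff.rfl
        rw [hadj, cyc_adj_iff]
        constructor
        · rintro ⟨hj1 | hj1, _⟩
          · left; exact congrArg Sum.inl hj1
          · right; exact congrArg Sum.inl hj1
        · rintro (hj | hj) <;> (injection hj with hj; subst hj)
          · exact ⟨Or.inl rfl, rfl⟩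
          · exact ⟨Or.inr rfl, hcon.symm⟩
      · simp only [Finset.mem_filter, Finset.mem_univ, true_and, Finset.mem_insert,
          Finset.mem_singleton]
        constructor
        · rintro ⟨_, hk⟩
          exfalso
          have hk0 : k = 0 := Subsingleton.elim _ _
          subst hk0
          exact hA i (hk.symm.trans hh.symm)
        · rintro (hj | hj) <;> exact absurd hj (by simp)
      
    have h2 := ho (Sum.inl (i + 1)) (f i)
    rw [hset] at h2
    rw [Finset.card_insert_of_notMem (by simpa using ne_add_two i),
      Finset.card_singleton] at h2
    rcases h2 with h2 | h2
    · omega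
    · exact (Nat.not_odd_iff_even.2 (by norm_num)) h2
  -- color class sizes on the rim
  set n : Fin 6 → ℕ := fun c => (Finset.univ.filter fun i : Fin 14 => f i = c).card with hn
  have hub : ∀ c : Fin 6,
      (Finset.univ.filter fun u => (wheelGraph 14).Adj (Sum.inr 0) u ∧ φ u = c).card = n c := by
    intro c
    have him : (Finset.univ.filter fun u => (wheelGraph 14).Adj (Sum.inr 0) u ∧ φ u = c)
        = (Finset.univ.filter fun i : Fin 14 => f i = c).image Sum.inl := by
      ext u
      rcases u with j | k
      · simp only [Finset.mem_filter, Finset.mem_univ, true_and, Finset.mem_image]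
        constructor
        · rintro ⟨_, hj⟩; exact ⟨j, by simpa using hj, rfl⟩
        · rintro ⟨j', hj', hj''⟩
          injection hj'' with hj''
          subst hj''
          exact ⟨trivial, by simpa using hj'⟩
      · have hk0 : k = 0 := Subsingleton.elim _ _
        subst hk0
        simp only [Finset.mem_filter, Finset.mem_univ, true_and, Finset.mem_image]
        constructor
        · rintro ⟨hadj, _⟩
          exact absurd hadj (by exact fun hx => hx.elim)
        · rintro ⟨j', _, hj''⟩
          exact absurd hj'' (by simp)
    rw [him, Finset.card_image_of_injective _ Sum.inl_injective]
  have hodd : ∀ c : Fin 6, n c = 0 ∨ Odd (n c) := by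
    intro c
    have := ho (Sum.inr 0) c
    rwa [hub c] at this
  have hzero : n h = 0 := by
    rw [hn]
    simp only [Finset.card_eq_zero, Finset.filter_eq_empty_iff]
    intro i _
    exact hA i
  have hle4 : ∀ c : Fin 6, n c ≤ 4 := by
    intro c
    apply card_le_four
    intro i hi
    simp only [Finset.mem_filter, Finset.mem_univ, true_and] at hi ⊢
    constructor
    · intro hcon
      exact hB i (hi.trans hcon.symm)
    · intro hcon
      exact hC i (hi.trans hcon.symm)
  have h013 : ∀ c : Fin 6, n c = 0 ∨ n c = 1 ∨ n c = 3 := by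
    intro c
    rcases hodd c with h0 | ⟨k, hk⟩
    · exact Or.inl h0
    · have := hle4 c; omega
  have hsum : n 0 + n 1 + n 2 + n 3 + n 4 + n 5 = 14 := by
    have := Finset.card_eq_sum_card_fiberwise
      (f := f) (s := (Finset.univ : Finset (Fin 14))) (t := (Finset.univ : Finset (Fin 6)))
      (fun i _ => Finset.mem_univ (f i))
    simp only [Finset.card_univ, Fintype.card_fin] at this
    rw [Fin.sum_univ_six] at this
    exact this.symm
  have c0 := h013 0; have c1 := h013 1; have c2 := h013 2
  have c3 := h013 3; have c4 := h013 4; have c5 := h013 5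
  rcases fin6_cases h with hc | hc | hc | hc | hc | hc <;> rw [hc] at hzero <;> omega

def pat14 : Fin 14 → Fin 7 := ![0, 1, 2, 3, 0, 1, 2, 3, 0, 1, 2, 3, 4, 5]

def goodColoring : Fin 14 ⊕ Fin 1 → Fin 7 := Sum.elim pat14 (fun _ => 6)

set_option maxRecDepth 10000 in
lemma goodColoring_is : IsStrongOddColoring (wheelGraph 14) goodColoring := by
  rw [iso_iff]
  decide

/-- The strong odd chromatic number of the wheel `W_14 = C_14 ∨ K_1` equals `7`. -/
theorem stmt_6 : strongOddChromaticNumber (wheelGraph 14) = 7 := by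
  have hmem : 7 ∈ {k : ℕ | ∃ φ : Fin 14 ⊕ Fin 1 → Fin k,
      IsStrongOddColoring (wheelGraph 14) φ} := ⟨goodColoring, goodColoring_is⟩
  apply le_antisymm
  · exact Nat.sInf_le hmem
  · apply le_csInf ⟨7, hmem⟩
    intro k hk
    by_contra hlt
    push_neg at hlt
    obtain ⟨φ, hφ⟩ := hk
    have hk6 : k ≤ 6 := by omega
    exact no_six_coloring _ (iso_castLE (wheelGraph 14) hk6 φ hφ)
end

section
/- For m, n ≥ 3, the strong odd chromatic number of I_y(G_m, G_n) equals χ_so(W_m) + χ_so(W_n) − 1, where W_k = C_k ∨ K_1 is the wheel on k + 1 vertices. -/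
open SimpleGraph

section FinHelpers
variable {k : ℕ} [NeZero k]

lemma fin_one_val (hk : 3 ≤ k) : (1 : Fin k).val = 1 := by
  rw [Fin.val_one']; exact Nat.mod_eq_of_lt (by omega)

lemma fin_two_val (hk : 3 ≤ k) : (2 : Fin k).val = 2 := by
  have : ((2 : Fin k) : ℕ) = ((1:Fin k) + (1:Fin k) : Fin k).val := by rw [Fin.val_add, fin_one_val hk]; rfl
  rw [this, Fin.val_add, fin_one_val hk]
  exact Nat.mod_eq_of_lt (by omega)

lemma fin_add_one_ne (hk : 3 ≤ k) (i : Fin k) : i ≠ i + 1 := by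
  intro h
  have h2 : (1 : Fin k) = 0 := (left_eq_add).mp h
  have := congrArg Fin.val h2
  rw [fin_one_val hk] at this
  simp at this

lemma fin_add_two_ne (hk : 3 ≤ k) (i : Fin k) : i ≠ i + 2 := by
  intro h
  have h2 : (2 : Fin k) = 0 := (left_eq_add).mp h
  have := congrArg Fin.val h2
  rw [fin_two_val hk] at this
  simp at this

lemma cycle_adj_iff (hk : 3 ≤ k) (i j : Fin k) :
    (cycleGraph k).Adj i j ↔ j = i + 1 ∨ j = i - 1 := by
  rw [cycleGraph_adj']
  have h1 : ∀ a b : Fin k, (a - b).val = 1 ↔ a - b = 1 := by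
    intro a b
    rw [Fin.ext_iff, fin_one_val hk]
  rw [h1, h1]
  constructor
  · rintro (h | h)
    · right; rw [← h, sub_sub_cancel]
    · left; rw [← h, add_sub_cancel]
  · rintro (h | h)
    · right; rw [h, add_comm, add_sub_cancel_right]
    · left; rw [h, sub_sub_cancel]

lemma cycle_adj_succ (hk : 3 ≤ k) (i : Fin k) : (cycleGraph k).Adj i (i + 1) := by
  rw [cycle_adj_iff hk]; left; rfl

end FinHelpers

def IsOddSqC {k : ℕ} [NeZero k] {α : Type*} (φ : Fin k → α) : Prop :=
  (∀ i, φ i ≠ φ (i+1)) ∧ (∀ i, φ i ≠ φ (i+2)) ∧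
  ∀ c, {i : Fin k | φ i = c}.ncard = 0 ∨ Odd {i : Fin k | φ i = c}.ncard

noncomputable def gg (k : ℕ) [NeZero k] : ℕ := sInf {g : ℕ | ∃ φ : Fin k → Fin g, IsOddSqC φ}

lemma gg_le {k : ℕ} [NeZero k] {α : Type*} (ψ : Fin k → α) (h : IsOddSqC ψ) :
    gg k ≤ (Set.range ψ).ncard := by
  have hfin : (Set.range ψ).Finite := Set.finite_range ψ
  have hft : Finite (Set.range ψ) := hfin.to_subtype
  have hcard : Nat.card (Set.range ψ) = (Set.range ψ).ncard := (Nat.card_coe_set_eq _)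
  let e : (Set.range ψ) ≃ Fin ((Set.range ψ).ncard) := Finite.equivFinOfCardEq hcard
  let φ' : Fin k → Fin ((Set.range ψ).ncard) :=
    fun i => e ⟨ψ i, Set.mem_range_self i⟩
  have key : ∀ (i : Fin k) c, φ' i = c ↔ ψ i = (e.symm c).val := by
    intro i c
    constructor
    · intro hc
      rw [← hc]
      show ψ i = (e.symm (e ⟨ψ i, Set.mem_range_self i⟩)).val
      rw [Equiv.symm_apply_apply]
    · intro hc
      have h2 : (⟨ψ i, Set.mem_range_self i⟩ : Set.range ψ) = e.symm c := Subtype.ext hc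
      show e ⟨ψ i, Set.mem_range_self i⟩ = c
      rw [h2, Equiv.apply_symm_apply]
  have hinj : ∀ i j : Fin k, φ' i = φ' j → ψ i = ψ j := by
    intro i j hij
    have := e.injective hij
    exact congrArg Subtype.val this
  refine Nat.sInf_le ⟨φ', ?_, ?_, ?_⟩
  · intro i hc; exact h.1 i (hinj _ _ hc)
  · intro i hc; exact h.2.1 i (hinj _ _ hc)
  · intro c
    have hset : {i : Fin k | φ' i = c} = {i : Fin k | ψ i = (e.symm c).val} := by
      ext i; exact key i c
    rw [hset]
    exact h.2.2 _

lemma gg_spec {k : ℕ} [NeZero k] (hk : 3 ≤ k) : ∃ φ : Fin k → Fin (gg k), IsOddSqC φ := by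
  have hne : {g : ℕ | ∃ φ : Fin k → Fin g, IsOddSqC φ}.Nonempty := by
    refine ⟨k, id, fun i => fin_add_one_ne hk i, fun i => fin_add_two_ne hk i, fun c => ?_⟩
    right
    have : {i : Fin k | id i = c} = {c} := by ext i; simp [eq_comm]
    rw [this, Set.ncard_singleton]
    exact odd_one
  exact Nat.sInf_mem hne

lemma gg_pos {k : ℕ} [NeZero k] (hk : 3 ≤ k) : 1 ≤ gg k := by
  obtain ⟨φ, -⟩ := gg_spec hk
  by_contra h
  have h0 : gg k = 0 := by omega
  exact absurd (φ ⟨0, by omega⟩).isLt (by omega)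

lemma class_small {V α : Type*} {G : SimpleGraph V} {φ : V → α} {v : V}
    (h : Set.InjOn φ {u | G.Adj v u}) (c : α) :
    {u : V | G.Adj v u ∧ φ u = c}.ncard = 0 ∨ Odd {u : V | G.Adj v u ∧ φ u = c}.ncard := by
  have hs : Set.Subsingleton {u : V | G.Adj v u ∧ φ u = c} := by
    intro x hx y hy
    exact h hx.1 hy.1 (hx.2.trans hy.2.symm)
  rcases hs.eq_empty_or_singleton with h0 | ⟨x, hx⟩
  · left; rw [h0]; simp
  · right; rw [hx, Set.ncard_singleton]; exact odd_one

section Wheel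
set_option linter.unusedSectionVars false
variable {k : ℕ} [NeZero k]

lemma wheel_adj_ll {i j : Fin k} : (wheelGraph k).Adj (Sum.inl i) (Sum.inl j) ↔ (cycleGraph k).Adj i j := Iff.rfl
lemma wheel_adj_lr {i : Fin k} {c : Fin 1} : (wheelGraph k).Adj (Sum.inl i) (Sum.inr c) ↔ True := Iff.rfl
lemma wheel_adj_rl {i : Fin k} {c : Fin 1} : (wheelGraph k).Adj (Sum.inr c) (Sum.inl i) ↔ True := Iff.rfl
lemma wheel_adj_rr {c c' : Fin 1} : (wheelGraph k).Adj (Sum.inr c) (Sum.inr c') ↔ False := Iff.rfl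

lemma wheel_hub_class {α : Type*} (Φ : Fin k ⊕ Fin 1 → α) (z : Fin 1) (c : α) :
    {u | (wheelGraph k).Adj (Sum.inr z) u ∧ Φ u = c}
      = Sum.inl '' {i : Fin k | Φ (Sum.inl i) = c} := by
  ext u
  rcases u with i | z'
  · simp only [Set.mem_setOf_eq, wheel_adj_rl, true_and, Set.mem_image]
    constructor
    · intro h; exact ⟨i, h, rfl⟩
    · rintro ⟨j, hj, hji⟩; cases Sum.inl_injective hji; exact hj
  · simp only [Set.mem_setOf_eq, wheel_adj_rr, false_and, Set.mem_image, false_iff]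
    rintro ⟨j, -, hj⟩; exact (Sum.inl_ne_inr hj).elim

lemma wheel_upper (hk : 3 ≤ k) :
    ∃ Φ : Fin k ⊕ Fin 1 → Fin (gg k + 1), IsStrongOddColoring (wheelGraph k) Φ := by
  obtain ⟨φ, h1, h2, h3⟩ := gg_spec hk
  refine ⟨Sum.elim (fun i => (φ i).castSucc) (fun _ => Fin.last _), ?_, ?_⟩
  · rintro (i | z) (j | z') hadj heq
    · rw [wheel_adj_ll, cycle_adj_iff hk] at hadj
      simp only [Sum.elim_inl] at heq
      rcases hadj with rfl | rfl
      · exact h1 i (Fin.castSucc_injective _ heq)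
      · have hij : i = (i - 1) + 1 := by rw [sub_add_cancel]
        exact h1 (i-1) (Fin.castSucc_injective _ (by rw [← hij]; exact heq.symm))
    · exact (Fin.castSucc_lt_last _).ne heq
    · exact (Fin.castSucc_lt_last _).ne' heq
    · exact hadj
  · rintro (i | z) c
    · -- cycle vertex: neighbors have pairwise distinct colors
      apply class_small
      intro u1 hu1 u2 hu2 heq
      have hne : (φ (i - 1)).castSucc ≠ (φ (i + 1)).castSucc := by
        intro h
        have h21 : i - 1 + 2 = i + 1 := by open Fin.CommRing in ring
        exact h2 (i - 1) (by rw [h21]; exact Fin.castSucc_injective _ h)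
      have key : ∀ u, (wheelGraph k).Adj (Sum.inl i) u →
          u = Sum.inl (i + 1) ∨ u = Sum.inl (i - 1) ∨ u = Sum.inr 0 := by
        rintro (j | z') hadj
        · rw [wheel_adj_ll, cycle_adj_iff hk] at hadj
          rcases hadj with rfl | rfl
          · exact Or.inl rfl
          · exact Or.inr (Or.inl rfl)
        · exact Or.inr (Or.inr (by rw [Subsingleton.elim z' 0]))
      rcases key u1 hu1 with rfl | rfl | rfl <;> rcases key u2 hu2 with rfl | rfl | rfl <;>
        simp only [Sum.elim_inl, Sum.elim_inr] at heq <;>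
        first
          | rfl
          | exact (hne heq).elim
          | exact (hne heq.symm).elim
          | exact ((Fin.castSucc_lt_last _).ne heq).elim
          | exact ((Fin.castSucc_lt_last _).ne' heq).elim
    · rw [wheel_hub_class]
      rw [Set.ncard_image_of_injective _ Sum.inl_injective]
      by_cases hc : c = Fin.last (gg k)
      · left
        have : {i : Fin k | Sum.elim (fun i => (φ i).castSucc) (fun _ : Fin 1 => Fin.last (gg k)) (Sum.inl i) = c} = ∅ := by
          ext i
          simp only [Sum.elim_inl, Set.mem_setOf_eq, Set.mem_empty_iff_false, iff_false]
          rw [hc]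
          exact (Fin.castSucc_lt_last _).ne
        rw [this]; simp
      · obtain ⟨c', rfl⟩ := Fin.exists_castSucc_eq.mpr hc
        have : {i : Fin k | Sum.elim (fun i => (φ i).castSucc) (fun _ : Fin 1 => Fin.last (gg k)) (Sum.inl i) = c'.castSucc}
            = {i : Fin k | φ i = c'} := by
          ext i
          simp only [Sum.elim_inl, Set.mem_setOf_eq]
          exact ⟨fun h => Fin.castSucc_injective _ h, fun h => by rw [h]⟩
        rw [this]
        exact h3 c'

end Wheel

section Wheel2
set_option linter.unusedSectionVars false
variable {k : ℕ} [NeZero k]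

lemma wheel_lower_s9 (hk : 3 ≤ k) {K : ℕ} (Φ : Fin k ⊕ Fin 1 → Fin K)
    (hΦ : IsStrongOddColoring (wheelGraph k) Φ) : gg k + 1 ≤ K := by
  obtain ⟨hprop, hodd⟩ := hΦ
  set ψ : Fin k → Fin K := fun i => Φ (Sum.inl i) with hψ
  have hOdd : IsOddSqC ψ := by
    refine ⟨?_, ?_, ?_⟩
    · intro i
      exact hprop (Sum.inl i) (Sum.inl (i+1)) (cycle_adj_succ hk i)
    · intro i heq
      have hcls : {u | (wheelGraph k).Adj (Sum.inl (i+1)) u ∧ Φ u = ψ i}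
          = {Sum.inl i, Sum.inl (i+2)} := by
        ext u
        simp only [Set.mem_setOf_eq, Set.mem_insert_iff, Set.mem_singleton_iff]
        constructor
        · rintro ⟨hadj, hc⟩
          rcases u with j | z
          · rw [wheel_adj_ll, cycle_adj_iff hk] at hadj
            rcases hadj with rfl | rfl
            · right; congr 1; open Fin.CommRing in ring
            · left; congr 1; rw [add_sub_cancel_right]
          · exfalso
            exact hprop (Sum.inl i) (Sum.inr z) trivial hc.symm
        · rintro (rfl | rfl)
          · refine ⟨?_, rfl⟩
            rw [wheel_adj_ll, cycle_adj_iff hk]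
            right; rw [add_sub_cancel_right]
          · refine ⟨?_, heq.symm⟩
            rw [wheel_adj_ll, cycle_adj_iff hk]
            left; open Fin.CommRing in ring
      have h2 := hodd (Sum.inl (i+1)) (ψ i)
      rw [hcls] at h2
      have hpair : ({Sum.inl i, Sum.inl (i+2)} : Set (Fin k ⊕ Fin 1)).ncard = 2 :=
        Set.ncard_pair (fun h => fin_add_two_ne hk i (Sum.inl_injective h))
      rw [hpair] at h2
      rcases h2 with h0 | ho
      · omega
      · exact (by decide : ¬ Odd 2) ho
    · intro c
      have := hodd (Sum.inr 0) c
      rwa [wheel_hub_class Φ 0 c, Set.ncard_image_of_injective _ Sum.inl_injective] at this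
  have hgle : gg k ≤ (Set.range ψ).ncard := gg_le ψ hOdd
  have hhub : Φ (Sum.inr 0) ∉ Set.range ψ := by
    rintro ⟨i, hi⟩
    exact hprop (Sum.inl i) (Sum.inr 0) trivial hi
  have hfin : (Set.range ψ).Finite := Set.finite_range ψ
  have hins : (insert (Φ (Sum.inr 0)) (Set.range ψ)).ncard = (Set.range ψ).ncard + 1 :=
    Set.ncard_insert_of_notMem hhub hfin
  have hle : (insert (Φ (Sum.inr 0)) (Set.range ψ)).ncard ≤ K := by
    have := Set.ncard_le_ncard (Set.subset_univ (insert (Φ (Sum.inr 0)) (Set.range ψ)))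
      Set.finite_univ
    rwa [Set.ncard_univ, Nat.card_eq_fintype_card, Fintype.card_fin] at this
  omega

lemma wheel_val (hk : 3 ≤ k) : strongOddChromaticNumber (wheelGraph k) = gg k + 1 := by
  obtain ⟨Φ, hΦ⟩ := wheel_upper hk
  refine le_antisymm (Nat.sInf_le ⟨Φ, hΦ⟩) (le_csInf ⟨gg k + 1, Φ, hΦ⟩ ?_)
  rintro K ⟨Φ', hΦ'⟩
  exact wheel_lower_s9 hk Φ' hΦ'

end Wheel2

lemma fin2 (c : Fin 2) : c = 0 ∨ c = 1 := by
  rcases c with ⟨v, hv⟩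
  interval_cases v
  · exact Or.inl rfl
  · exact Or.inr rfl

section IySec
set_option linter.unusedSectionVars false
set_option maxHeartbeats 1000000
variable {m n : ℕ} [NeZero m] [NeZero n]

lemma iy_nbhd_cm (hm : 3 ≤ m) (i : Fin m)
    (u : (Fin m ⊕ Fin 2) ⊕ {w : Fin n ⊕ Fin 2 // w ≠ Sum.inr 1})
    (hadj : (Iy m n).Adj (Sum.inl (Sum.inl i)) u) :
    u = Sum.inl (Sum.inl (i+1)) ∨ u = Sum.inl (Sum.inl (i-1)) ∨
      u = Sum.inl (Sum.inr 0) ∨ u = Sum.inl (Sum.inr 1) := by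
  rcases u with (j | c) | ⟨w, hw⟩
  · have h : (cycleGraph m).Adj i j := hadj
    rw [cycle_adj_iff hm] at h
    rcases h with rfl | rfl
    · exact Or.inl rfl
    · exact Or.inr (Or.inl rfl)
  · rcases fin2 c with rfl | rfl
    · exact Or.inr (Or.inr (Or.inl rfl))
    · exact Or.inr (Or.inr (Or.inr rfl))
  · exact (Sum.inl_ne_inr hadj.1).elim

lemma iy_nbhd_cn (hn : 3 ≤ n) (j : Fin n)
    (hj : (Sum.inl j : Fin n ⊕ Fin 2) ≠ Sum.inr 1)
    (hj1 : (Sum.inl (j+1) : Fin n ⊕ Fin 2) ≠ Sum.inr 1)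
    (hj2 : (Sum.inl (j-1) : Fin n ⊕ Fin 2) ≠ Sum.inr 1)
    (h0 : (Sum.inr 0 : Fin n ⊕ Fin 2) ≠ Sum.inr 1)
    (u : (Fin m ⊕ Fin 2) ⊕ {w : Fin n ⊕ Fin 2 // w ≠ Sum.inr 1})
    (hadj : (Iy m n).Adj (Sum.inr ⟨Sum.inl j, hj⟩) u) :
    u = Sum.inr ⟨Sum.inl (j+1), hj1⟩ ∨ u = Sum.inr ⟨Sum.inl (j-1), hj2⟩ ∨
      u = Sum.inr ⟨Sum.inr 0, h0⟩ ∨ u = Sum.inl (Sum.inr 1) := by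
  rcases u with (i | c) | ⟨w | c, hw⟩
  · exact (Sum.inl_ne_inr hadj.1).elim
  · have hc : c = 1 := Sum.inr_injective hadj.1
    subst hc
    exact Or.inr (Or.inr (Or.inr rfl))
  · have h : (cycleGraph n).Adj j w := hadj
    rw [cycle_adj_iff hn] at h
    rcases h with rfl | rfl
    · exact Or.inl (congrArg Sum.inr (Subtype.ext rfl))
    · exact Or.inr (Or.inl (congrArg Sum.inr (Subtype.ext rfl)))
  · rcases fin2 c with rfl | rfl
    · exact Or.inr (Or.inr (Or.inl (congrArg Sum.inr (Subtype.ext rfl))))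
    · exact (hw rfl).elim

lemma iy_xm_class {α : Type*} (Φ : ((Fin m ⊕ Fin 2) ⊕ {w : Fin n ⊕ Fin 2 // w ≠ Sum.inr 1}) → α)
    (c : α) :
    {u | (Iy m n).Adj (Sum.inl (Sum.inr 0)) u ∧ Φ u = c}
      = (fun i : Fin m => (Sum.inl (Sum.inl i) : (Fin m ⊕ Fin 2) ⊕ {w : Fin n ⊕ Fin 2 // w ≠ Sum.inr 1}))
          '' {i : Fin m | Φ (Sum.inl (Sum.inl i)) = c} := by
  ext u
  simp only [Set.mem_setOf_eq, Set.mem_image]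
  constructor
  · rintro ⟨hadj, hc⟩
    rcases u with (i | c') | ⟨w, hw⟩
    · exact ⟨i, hc, rfl⟩
    · exact (hadj : False).elim
    · exact absurd (Sum.inr_injective hadj.1) (by decide)
  · rintro ⟨i, hi, rfl⟩
    exact ⟨trivial, hi⟩

def cnV (m : ℕ) {n : ℕ} (j : Fin n) :
    (Fin m ⊕ Fin 2) ⊕ {w : Fin n ⊕ Fin 2 // w ≠ Sum.inr 1} :=
  Sum.inr ⟨Sum.inl j, Sum.inl_ne_inr⟩

lemma cnV_inj : Function.Injective (cnV m (n:=n)) := by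
  intro a b h
  simpa [cnV] using h

lemma iy_xn_class {α : Type*} (Φ : ((Fin m ⊕ Fin 2) ⊕ {w : Fin n ⊕ Fin 2 // w ≠ Sum.inr 1}) → α)
    (h0 : (Sum.inr 0 : Fin n ⊕ Fin 2) ≠ Sum.inr 1) (c : α) :
    {u | (Iy m n).Adj (Sum.inr ⟨Sum.inr 0, h0⟩) u ∧ Φ u = c}
      = cnV m '' {j : Fin n | Φ (cnV m j) = c} := by
  ext u
  simp only [Set.mem_setOf_eq, Set.mem_image]
  constructor
  · rintro ⟨hadj, hc⟩
    rcases u with (i | c') | ⟨w | c', hw⟩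
    · exact (Sum.inl_ne_inr hadj.1).elim
    · exact (hadj.2 : False).elim
    · refine ⟨w, ?_, congrArg Sum.inr (Subtype.ext rfl)⟩
      rw [show cnV m w = Sum.inr ⟨Sum.inl w, hw⟩ from congrArg Sum.inr (Subtype.ext rfl)]
      exact hc
    · exact (hadj : False).elim
  · rintro ⟨j, hj, rfl⟩
    exact ⟨trivial, hj⟩

lemma iy_y_class {α : Type*} (Φ : ((Fin m ⊕ Fin 2) ⊕ {w : Fin n ⊕ Fin 2 // w ≠ Sum.inr 1}) → α)
    (c : α) :
    {u | (Iy m n).Adj (Sum.inl (Sum.inr 1)) u ∧ Φ u = c}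
      = ((fun i : Fin m => (Sum.inl (Sum.inl i) : (Fin m ⊕ Fin 2) ⊕ {w : Fin n ⊕ Fin 2 // w ≠ Sum.inr 1}))
          '' {i : Fin m | Φ (Sum.inl (Sum.inl i)) = c})
        ∪ (cnV m '' {j : Fin n | Φ (cnV m j) = c}) := by
  ext u
  simp only [Set.mem_setOf_eq, Set.mem_union, Set.mem_image]
  constructor
  · rintro ⟨hadj, hc⟩
    rcases u with (i | c') | ⟨w | c', hw⟩
    · exact Or.inl ⟨i, hc, rfl⟩
    · exact (hadj : False).elim
    · refine Or.inr ⟨w, ?_, congrArg Sum.inr (Subtype.ext rfl)⟩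
      rw [show cnV m w = Sum.inr ⟨Sum.inl w, hw⟩ from congrArg Sum.inr (Subtype.ext rfl)]
      exact hc
    · exact (hadj.2 : False).elim
  · rintro (⟨i, hi, rfl⟩ | ⟨j, hj, rfl⟩)
    · exact ⟨trivial, hi⟩
    · exact ⟨⟨rfl, trivial⟩, hj⟩

def iyColor {m n : ℕ} (gm gn : ℕ) (φm : Fin m → Fin gm) (φn : Fin n → Fin gn) :
    ((Fin m ⊕ Fin 2) ⊕ {w : Fin n ⊕ Fin 2 // w ≠ Sum.inr 1}) → Fin (gm + gn + 1)
  | Sum.inl (Sum.inl i) => ⟨(φm i).val, by have := (φm i).isLt; omega⟩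
  | Sum.inl (Sum.inr c) => if c = 0 then ⟨gm, by omega⟩ else ⟨gm + gn, by omega⟩
  | Sum.inr ⟨Sum.inl j, _⟩ => ⟨gm + (φn j).val, by have := (φn j).isLt; omega⟩
  | Sum.inr ⟨Sum.inr _, _⟩ => ⟨0, by omega⟩

section IyColorLemmas
variable {m n gm gn : ℕ} (φm : Fin m → Fin gm) (φn : Fin n → Fin gn)

lemma iyColor_val_cm (i : Fin m) :
    (iyColor gm gn φm φn (Sum.inl (Sum.inl i))).val = (φm i).val := rfl
lemma iyColor_val_xm :
    (iyColor gm gn φm φn (Sum.inl (Sum.inr 0))).val = gm := by simp [iyColor]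
lemma iyColor_val_y :
    (iyColor gm gn φm φn (Sum.inl (Sum.inr 1))).val = gm + gn := by simp [iyColor]
lemma iyColor_val_cn (j : Fin n) (h : (Sum.inl j : Fin n ⊕ Fin 2) ≠ Sum.inr 1) :
    (iyColor gm gn φm φn (Sum.inr ⟨Sum.inl j, h⟩)).val = gm + (φn j).val := rfl
lemma iyColor_val_xn (c : Fin 2) (h : (Sum.inr c : Fin n ⊕ Fin 2) ≠ Sum.inr 1) :
    (iyColor gm gn φm φn (Sum.inr ⟨Sum.inr c, h⟩)).val = 0 := rfl

end IyColorLemmas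

lemma iy_upper (hm : 3 ≤ m) (hn : 3 ≤ n) :
    ∃ Φ : ((Fin m ⊕ Fin 2) ⊕ {w : Fin n ⊕ Fin 2 // w ≠ Sum.inr 1}) → Fin (gg m + gg n + 1),
      IsStrongOddColoring (Iy m n) Φ := by
  obtain ⟨φm, hm1, hm2, hm3⟩ := gg_spec hm
  obtain ⟨φn, hn1, hn2, hn3⟩ := gg_spec hn
  have hgm1 : 1 ≤ gg m := gg_pos hm
  have hgn1 : 1 ≤ gg n := gg_pos hn
  set Φ := iyColor (gg m) (gg n) φm φn with hΦdef
  refine ⟨Φ, ?_, ?_⟩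
  · -- properness
    rintro ((i | c) | ⟨w | c, hw⟩) ((i' | c') | ⟨w' | c', hw'⟩) hadj heq <;>
      have hv := congrArg Fin.val heq
    -- case (cm i, cm i')
    · have h : (cycleGraph m).Adj i i' := hadj
      rw [cycle_adj_iff hm] at h
      rw [hΦdef, iyColor_val_cm, iyColor_val_cm] at hv
      rcases h with rfl | rfl
      · exact hm1 i (Fin.val_injective hv)
      · have hii : i = (i-1)+1 := by rw [sub_add_cancel]
        exact hm1 (i-1) (by rw [← hii]; exact (Fin.val_injective hv).symm)
    -- (cm i, xm/y)
    · rcases fin2 c' with rfl | rfl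
      · rw [hΦdef, iyColor_val_cm, iyColor_val_xm] at hv
        have := (φm i).isLt; omega
      · rw [hΦdef, iyColor_val_cm, iyColor_val_y] at hv
        have := (φm i).isLt; omega
    -- (cm i, cn)
    · exact Sum.inl_ne_inr hadj.1
    -- (cm i, xn)
    · exact Sum.inl_ne_inr hadj.1
    -- (xm/y, cm i')
    · rcases fin2 c with rfl | rfl
      · rw [hΦdef, iyColor_val_xm, iyColor_val_cm] at hv
        have := (φm i').isLt; omega
      · rw [hΦdef, iyColor_val_y, iyColor_val_cm] at hv
        have := (φm i').isLt; omega
    -- (xm/y, xm/y)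
    · exact (hadj : False).elim
    -- (xm/y, cn)
    · have hc := Sum.inr_injective hadj.1; subst hc
      rw [hΦdef, iyColor_val_y, iyColor_val_cn] at hv
      have := (φn w').isLt; omega
    -- (xm/y, xn)
    · exact (hadj.2 : False).elim
    -- (cn, cm i')
    · exact Sum.inl_ne_inr hadj.1
    -- (cn, xm/y)
    · have hc := Sum.inr_injective hadj.1; subst hc
      rw [hΦdef, iyColor_val_cn, iyColor_val_y] at hv
      have := (φn w).isLt; omega
    -- (cn, cn)
    · have h : (cycleGraph n).Adj w w' := hadj
      rw [cycle_adj_iff hn] at h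
      rw [hΦdef, iyColor_val_cn, iyColor_val_cn] at hv
      have hvv : (φn w).val = (φn w').val := by omega
      rcases h with rfl | rfl
      · exact hn1 w (Fin.val_injective hvv)
      · have hii : w = (w-1)+1 := by rw [sub_add_cancel]
        exact hn1 (w-1) (by rw [← hii]; exact (Fin.val_injective hvv).symm)
    -- (cn, xn)
    · rw [hΦdef, iyColor_val_cn, iyColor_val_xn] at hv
      omega
    -- (xn, cm i')
    · exact Sum.inl_ne_inr hadj.1
    -- (xn, xm/y)
    · exact (hadj.2 : False).elim
    -- (xn, cn)
    · rw [hΦdef, iyColor_val_xn, iyColor_val_cn] at hv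
      omega
    -- (xn, xn)
    · exact (hadj : False).elim
  · -- strong odd condition
    rintro ((i | c) | ⟨w | c, hw⟩) c0
    -- v = cm i
    · apply class_small
      have harith : i - 1 + 2 = i + 1 := by open Fin.CommRing in ring
      have hneq : (φm (i+1)).val ≠ (φm (i-1)).val := fun h =>
        hm2 (i-1) (by rw [harith]; exact (Fin.val_injective h).symm)
      have ha := (φm (i+1)).isLt
      have hb := (φm (i-1)).isLt
      intro u1 hu1 u2 hu2 heq
      have hv := congrArg Fin.val heq
      rcases iy_nbhd_cm hm i u1 hu1 with rfl | rfl | rfl | rfl <;>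
        rcases iy_nbhd_cm hm i u2 hu2 with rfl | rfl | rfl | rfl <;>
        rw [hΦdef] at hv <;>
        simp only [iyColor_val_cm, iyColor_val_xm, iyColor_val_y] at hv <;>
        first
          | rfl
          | (exact (hneq hv).elim)
          | (exact (hneq hv.symm).elim)
          | omega
    -- v = xm or y
    · rcases fin2 c with rfl | rfl
      · -- xm
        rw [iy_xm_class]
        rw [Set.ncard_image_of_injective _
          (fun a b h => Sum.inl_injective (Sum.inl_injective h) :
            Function.Injective (fun i : Fin m =>
              (Sum.inl (Sum.inl i) : (Fin m ⊕ Fin 2) ⊕ {w : Fin n ⊕ Fin 2 // w ≠ Sum.inr 1})))]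
        by_cases hc : c0.val < gg m
        · have hset : {i : Fin m | Φ (Sum.inl (Sum.inl i)) = c0} = {i : Fin m | φm i = ⟨c0.val, hc⟩} := by
            ext i
            rw [Set.mem_setOf_eq, Set.mem_setOf_eq, Fin.ext_iff, Fin.ext_iff, hΦdef, iyColor_val_cm]
          rw [hset]
          exact hm3 _
        · left
          have hset : {i : Fin m | Φ (Sum.inl (Sum.inl i)) = c0} = ∅ := by
            ext i
            simp only [Set.mem_setOf_eq, Set.mem_empty_iff_false, iff_false]
            intro h
            have hv := congrArg Fin.val h
            rw [hΦdef, iyColor_val_cm] at hv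
            have := (φm i).isLt; omega
          rw [hset, Set.ncard_empty]
      · -- y
        rw [iy_y_class]
        have hinj1 : Function.Injective (fun i : Fin m =>
            (Sum.inl (Sum.inl i) : (Fin m ⊕ Fin 2) ⊕ {w : Fin n ⊕ Fin 2 // w ≠ Sum.inr 1})) :=
          fun a b h => Sum.inl_injective (Sum.inl_injective h)
        rcases Nat.lt_or_ge c0.val (gg m) with hc | hc
        · have hn0 : {j : Fin n | Φ (cnV m j) = c0} = ∅ := by
            ext j
            simp only [Set.mem_setOf_eq, Set.mem_empty_iff_false, iff_false]
            intro h
            have hv := congrArg Fin.val h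
            rw [hΦdef, cnV, iyColor_val_cn] at hv
            omega
          rw [hn0, Set.image_empty, Set.union_empty,
            Set.ncard_image_of_injective _ hinj1]
          have hset : {i : Fin m | Φ (Sum.inl (Sum.inl i)) = c0} = {i : Fin m | φm i = ⟨c0.val, hc⟩} := by
            ext i
            rw [Set.mem_setOf_eq, Set.mem_setOf_eq, Fin.ext_iff, Fin.ext_iff, hΦdef, iyColor_val_cm]
          rw [hset]
          exact hm3 _
        · have hm0 : {i : Fin m | Φ (Sum.inl (Sum.inl i)) = c0} = ∅ := by
            ext i
            simp only [Set.mem_setOf_eq, Set.mem_empty_iff_false, iff_false]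
            intro h
            have hv := congrArg Fin.val h
            rw [hΦdef, iyColor_val_cm] at hv
            have := (φm i).isLt; omega
          rw [hm0, Set.image_empty, Set.empty_union,
            Set.ncard_image_of_injective _ (cnV_inj (m := m) (n := n))]
          rcases Nat.lt_or_ge c0.val (gg m + gg n) with hc2 | hc2
          · have hcc : c0.val - gg m < gg n := by omega
            have hset : {j : Fin n | Φ (cnV m j) = c0} = {j : Fin n | φn j = ⟨c0.val - gg m, hcc⟩} := by
              ext j
              rw [Set.mem_setOf_eq, Set.mem_setOf_eq, Fin.ext_iff, Fin.ext_iff, hΦdef, cnV,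
                iyColor_val_cn]
              have hmk : (⟨c0.val - gg m, hcc⟩ : Fin (gg n)).val = c0.val - gg m := rfl
              omega
            rw [hset]
            exact hn3 _
          · left
            have hset : {j : Fin n | Φ (cnV m j) = c0} = ∅ := by
              ext j
              simp only [Set.mem_setOf_eq, Set.mem_empty_iff_false, iff_false]
              intro h
              have hv := congrArg Fin.val h
              rw [hΦdef, cnV, iyColor_val_cn] at hv
              have hlt := c0.isLt
              have := (φn j).isLt; omega
            rw [hset, Set.ncard_empty]
    -- v = cn w or xn
    · apply class_small
      have harith : w - 1 + 2 = w + 1 := by open Fin.CommRing in ring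
      have hneq : (φn (w+1)).val ≠ (φn (w-1)).val := fun h =>
        hn2 (w-1) (by rw [harith]; exact (Fin.val_injective h).symm)
      have ha := (φn (w+1)).isLt
      have hb := (φn (w-1)).isLt
      intro u1 hu1 u2 hu2 heq
      have hv := congrArg Fin.val heq
      rcases iy_nbhd_cn hn w hw Sum.inl_ne_inr Sum.inl_ne_inr (by simp) u1 hu1 with rfl | rfl | rfl | rfl <;>
        rcases iy_nbhd_cn hn w hw Sum.inl_ne_inr Sum.inl_ne_inr (by simp) u2 hu2 with rfl | rfl | rfl | rfl <;>
        rw [hΦdef] at hv <;>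
        simp only [iyColor_val_cn, iyColor_val_xn, iyColor_val_y] at hv <;>
        first
          | rfl
          | (exact (hneq hv).elim)
          | (exact (hneq hv.symm).elim)
          | omega
    · rcases fin2 c with rfl | rfl
      · rw [iy_xn_class Φ hw]
        rw [Set.ncard_image_of_injective _ (cnV_inj (m := m) (n := n))]
        rcases Nat.lt_or_ge c0.val (gg m) with hc | hc
        · left
          have hset : {j : Fin n | Φ (cnV m j) = c0} = ∅ := by
            ext j
            simp only [Set.mem_setOf_eq, Set.mem_empty_iff_false, iff_false]
            intro h
            have hv := congrArg Fin.val h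
            rw [hΦdef, cnV, iyColor_val_cn] at hv
            omega
          rw [hset, Set.ncard_empty]
        · rcases Nat.lt_or_ge c0.val (gg m + gg n) with hc2 | hc2
          · have hcc : c0.val - gg m < gg n := by omega
            have hset : {j : Fin n | Φ (cnV m j) = c0} = {j : Fin n | φn j = ⟨c0.val - gg m, hcc⟩} := by
              ext j
              rw [Set.mem_setOf_eq, Set.mem_setOf_eq, Fin.ext_iff, Fin.ext_iff, hΦdef, cnV,
                iyColor_val_cn]
              have hmk : (⟨c0.val - gg m, hcc⟩ : Fin (gg n)).val = c0.val - gg m := rfl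
              omega
            rw [hset]
            exact hn3 _
          · left
            have hset : {j : Fin n | Φ (cnV m j) = c0} = ∅ := by
              ext j
              simp only [Set.mem_setOf_eq, Set.mem_empty_iff_false, iff_false]
              intro h
              have hv := congrArg Fin.val h
              rw [hΦdef, cnV, iyColor_val_cn] at hv
              have hlt := c0.isLt
              have := (φn j).isLt; omega
            rw [hset, Set.ncard_empty]
      · exact (hw rfl).elim

lemma iy_lower (hm : 3 ≤ m) (hn : 3 ≤ n) {K : ℕ}
    (Φ : ((Fin m ⊕ Fin 2) ⊕ {w : Fin n ⊕ Fin 2 // w ≠ Sum.inr 1}) → Fin K)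
    (hΦ : IsStrongOddColoring (Iy m n) Φ) : gg m + gg n + 1 ≤ K := by
  obtain ⟨hprop, hodd⟩ := hΦ
  have hxn0 : (Sum.inr 0 : Fin n ⊕ Fin 2) ≠ Sum.inr 1 := by simp
  set ψm : Fin m → Fin K := fun i => Φ (Sum.inl (Sum.inl i)) with hψm
  set ψn : Fin n → Fin K := fun j => Φ (cnV m j) with hψn
  have hinj1 : Function.Injective (fun i : Fin m =>
      (Sum.inl (Sum.inl i) : (Fin m ⊕ Fin 2) ⊕ {w : Fin n ⊕ Fin 2 // w ≠ Sum.inr 1})) :=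
    fun a b h => Sum.inl_injective (Sum.inl_injective h)
  have hadj_cm_cm : ∀ i j : Fin m, (cycleGraph m).Adj i j →
      (Iy m n).Adj (Sum.inl (Sum.inl i)) (Sum.inl (Sum.inl j)) := fun i j h => h
  have hadj_cm_xm : ∀ i : Fin m,
      (Iy m n).Adj (Sum.inl (Sum.inl i)) (Sum.inl (Sum.inr 0)) := fun i => trivial
  have hadj_cm_y : ∀ i : Fin m,
      (Iy m n).Adj (Sum.inl (Sum.inl i)) (Sum.inl (Sum.inr 1)) := fun i => trivial
  have hadj_y_cn : ∀ j : Fin n,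
      (Iy m n).Adj (Sum.inl (Sum.inr 1)) (cnV m j) := fun j => ⟨rfl, trivial⟩
  have hadj_xn_cn : ∀ j : Fin n,
      (Iy m n).Adj (Sum.inr ⟨Sum.inr 0, hxn0⟩) (cnV m j) := fun j => trivial
  have hadj_cn_cn : ∀ j j' : Fin n, (cycleGraph n).Adj j j' →
      (Iy m n).Adj (cnV m j) (cnV m j') := fun j j' h => h
  have hOddm : IsOddSqC ψm := by
    refine ⟨?_, ?_, ?_⟩
    · intro i
      exact hprop _ _ (hadj_cm_cm i (i+1) (cycle_adj_succ hm i))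
    · intro i heq
      have hcls : {u | (Iy m n).Adj (Sum.inl (Sum.inl (i+1))) u ∧ Φ u = ψm i}
          = {Sum.inl (Sum.inl i), Sum.inl (Sum.inl (i+2))} := by
        ext u
        simp only [Set.mem_setOf_eq, Set.mem_insert_iff, Set.mem_singleton_iff]
        constructor
        · rintro ⟨hadj, hc⟩
          rcases iy_nbhd_cm hm (i+1) u hadj with rfl | rfl | rfl | rfl
          · right; congr 2; open Fin.CommRing in ring
          · left; congr 2; rw [add_sub_cancel_right]
          · exact absurd hc.symm (hprop _ _ (hadj_cm_xm i))
          · exact absurd hc.symm (hprop _ _ (hadj_cm_y i))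
        · rintro (rfl | rfl)
          · refine ⟨hadj_cm_cm _ _ ?_, rfl⟩
            rw [cycle_adj_iff hm]; right; rw [add_sub_cancel_right]
          · refine ⟨hadj_cm_cm _ _ ?_, heq.symm⟩
            rw [cycle_adj_iff hm]; left; open Fin.CommRing in ring
      have h2 := hodd (Sum.inl (Sum.inl (i+1))) (ψm i)
      rw [hcls, Set.ncard_pair
        (fun h => fin_add_two_ne hm i (Sum.inl_injective (Sum.inl_injective h)))] at h2
      rcases h2 with h0 | ho
      · omega
      · exact ((by decide : ¬ Odd 2) ho).elim
    · intro c
      have h := hodd (Sum.inl (Sum.inr 0)) c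
      rwa [iy_xm_class, Set.ncard_image_of_injective _ hinj1] at h
  have hOddn : IsOddSqC ψn := by
    refine ⟨?_, ?_, ?_⟩
    · intro j
      exact hprop _ _ (hadj_cn_cn j (j+1) (cycle_adj_succ hn j))
    · intro j heq
      have hcls : {u | (Iy m n).Adj (cnV m (j+1)) u ∧ Φ u = ψn j}
          = {cnV m j, cnV m (j+2)} := by
        ext u
        simp only [Set.mem_setOf_eq, Set.mem_insert_iff, Set.mem_singleton_iff]
        constructor
        · rintro ⟨hadj, hc⟩
          rcases iy_nbhd_cn hn (j+1) Sum.inl_ne_inr Sum.inl_ne_inr Sum.inl_ne_inr hxn0 u hadj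
            with rfl | rfl | rfl | rfl
          · right
            refine congrArg Sum.inr (Subtype.ext ?_)
            show (Sum.inl (j+1+1) : Fin n ⊕ Fin 2) = Sum.inl (j+2)
            congr 1; open Fin.CommRing in ring
          · left
            refine congrArg Sum.inr (Subtype.ext ?_)
            show (Sum.inl (j+1-1) : Fin n ⊕ Fin 2) = Sum.inl j
            congr 1; rw [add_sub_cancel_right]
          · exact absurd hc.symm (hprop _ _ (hadj_xn_cn j)).symm
          · exact absurd hc.symm (hprop _ _ (hadj_y_cn j)).symm
        · rintro (rfl | rfl)
          · refine ⟨hadj_cn_cn _ _ ?_, rfl⟩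
            rw [cycle_adj_iff hn]; right; rw [add_sub_cancel_right]
          · refine ⟨hadj_cn_cn _ _ ?_, heq.symm⟩
            rw [cycle_adj_iff hn]; left; open Fin.CommRing in ring
      have h2 := hodd (cnV m (j+1)) (ψn j)
      rw [hcls, Set.ncard_pair (fun h => fin_add_two_ne hn j (cnV_inj h))] at h2
      rcases h2 with h0 | ho
      · omega
      · exact ((by decide : ¬ Odd 2) ho).elim
    · intro c
      have h := hodd (Sum.inr ⟨Sum.inr 0, hxn0⟩) c
      rwa [iy_xn_class Φ hxn0, Set.ncard_image_of_injective _ (cnV_inj (m := m) (n := n))] at h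
  have hggm : gg m ≤ (Set.range ψm).ncard := gg_le ψm hOddm
  have hggn : gg n ≤ (Set.range ψn).ncard := gg_le ψn hOddn
  have hdisj : Disjoint (Set.range ψm) (Set.range ψn) := by
    rw [Set.disjoint_left]
    rintro c ⟨i0, hi0⟩ ⟨j0, hj0⟩
    have hMne : {i : Fin m | ψm i = c}.Nonempty := ⟨i0, hi0⟩
    have hNne : {j : Fin n | ψn j = c}.Nonempty := ⟨j0, hj0⟩
    have hModd : Odd {i : Fin m | ψm i = c}.ncard := by
      rcases hOddm.2.2 c with h0 | h
      · rw [Set.ncard_eq_zero (Set.toFinite _)] at h0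
        exact absurd h0 (Set.nonempty_iff_ne_empty.mp hMne)
      · exact h
    have hNodd : Odd {j : Fin n | ψn j = c}.ncard := by
      rcases hOddn.2.2 c with h0 | h
      · rw [Set.ncard_eq_zero (Set.toFinite _)] at h0
        exact absurd h0 (Set.nonempty_iff_ne_empty.mp hNne)
      · exact h
    have hy := hodd (Sum.inl (Sum.inr 1)) c
    rw [iy_y_class] at hy
    have hdisj2 : Disjoint
        ((fun i : Fin m => (Sum.inl (Sum.inl i) : (Fin m ⊕ Fin 2) ⊕ {w : Fin n ⊕ Fin 2 // w ≠ Sum.inr 1}))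
          '' {i : Fin m | Φ (Sum.inl (Sum.inl i)) = c})
        (cnV m '' {j : Fin n | Φ (cnV m j) = c}) := by
      rw [Set.disjoint_left]
      rintro x ⟨i, -, rfl⟩ ⟨j, -, hj⟩
      exact Sum.inl_ne_inr hj.symm
    rw [Set.ncard_union_eq hdisj2 (Set.toFinite _) (Set.toFinite _),
      Set.ncard_image_of_injective _ hinj1,
      Set.ncard_image_of_injective _ (cnV_inj (m := m) (n := n))] at hy
    have e1 : {i : Fin m | Φ (Sum.inl (Sum.inl i)) = c} = {i : Fin m | ψm i = c} := rfl
    have e2 : {j : Fin n | Φ (cnV m j) = c} = {j : Fin n | ψn j = c} := rfl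
    rw [e1, e2] at hy
    rw [Nat.odd_iff] at hModd hNodd
    rcases hy with h0 | ho
    · omega
    · rw [Nat.odd_iff] at ho; omega
  have hyno : Φ (Sum.inl (Sum.inr 1)) ∉ Set.range ψm ∪ Set.range ψn := by
    rintro (⟨i, hi⟩ | ⟨j, hj⟩)
    · exact hprop _ _ (hadj_cm_y i) hi
    · exact hprop _ _ (hadj_y_cn j) hj.symm
  have hucard : (Set.range ψm ∪ Set.range ψn).ncard
      = (Set.range ψm).ncard + (Set.range ψn).ncard :=
    Set.ncard_union_eq hdisj (Set.toFinite _) (Set.toFinite _)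
  have hins : (insert (Φ (Sum.inl (Sum.inr 1))) (Set.range ψm ∪ Set.range ψn)).ncard
      = (Set.range ψm ∪ Set.range ψn).ncard + 1 :=
    Set.ncard_insert_of_notMem hyno (Set.toFinite _)
  have hle : (insert (Φ (Sum.inl (Sum.inr 1))) (Set.range ψm ∪ Set.range ψn)).ncard ≤ K := by
    have h := Set.ncard_le_ncard
      (Set.subset_univ (insert (Φ (Sum.inl (Sum.inr 1))) (Set.range ψm ∪ Set.range ψn)))
      Set.finite_univ
    rwa [Set.ncard_univ, Nat.card_eq_fintype_card, Fintype.card_fin] at h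
  omega

lemma iy_val (hm : 3 ≤ m) (hn : 3 ≤ n) :
    strongOddChromaticNumber (Iy m n) = gg m + gg n + 1 := by
  obtain ⟨Φ, hΦ⟩ := iy_upper hm hn
  refine le_antisymm (Nat.sInf_le ⟨Φ, hΦ⟩) (le_csInf ⟨gg m + gg n + 1, Φ, hΦ⟩ ?_)
  rintro K ⟨Φ', hΦ'⟩
  exact iy_lower hm hn Φ' hΦ'

end IySec

/-- For `m, n ≥ 3`, the strong odd chromatic number of `I_y(G_m, G_n)` equals
`χ_so(W_m) + χ_so(W_n) - 1`. -/
theorem stmt_9 (m n : ℕ) (hm : 3 ≤ m) (hn : 3 ≤ n) :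
    strongOddChromaticNumber (Iy m n) =
      strongOddChromaticNumber (wheelGraph m) + strongOddChromaticNumber (wheelGraph n) - 1 := by
  haveI : NeZero m := ⟨by omega⟩
  haveI : NeZero n := ⟨by omega⟩
  rw [iy_val hm hn, wheel_val hm, wheel_val hn]
  have h1 : 1 ≤ gg m := gg_pos hm
  omega
end

section
/- For every finite simple graph G, there exists a finite simple graph H containing G as an induced subgraph such that the strong odd chromatic number of H equals the chromatic number of G, i.e., χ_so(H) = χ(G). -/
open SimpleGraph

lemma isStrongOddColoring_comp_iso {V W α : Type*} {G : SimpleGraph V} {H : SimpleGraph W}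
    (e : G ≃g H) {φ : W → α} (h : IsStrongOddColoring H φ) :
    IsStrongOddColoring G (φ ∘ e) := by
  constructor
  · intro u v huv
    exact h.1 _ _ (e.map_adj_iff.2 huv)
  · intro v c
    have hset : {u : W | H.Adj (e v) u ∧ φ u = c}
        = e '' {u : V | G.Adj v u ∧ (φ ∘ e) u = c} := by
      ext w
      simp only [Set.mem_image, Set.mem_setOf_eq, Function.comp]
      constructor
      · rintro ⟨ha, hc⟩
        refine ⟨e.symm w, ⟨?_, by simpa⟩, by simp⟩
        rw [← e.map_adj_iff]
        simpa using ha
      · rintro ⟨u, ⟨ha, hc⟩, rfl⟩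
        exact ⟨e.map_adj_iff.2 ha, hc⟩
    have h2 := h.2 (e v) c
    rwa [hset, Set.ncard_image_of_injective _ e.injective] at h2

lemma strongOddChromaticNumber_eq_of_iso {V W : Type*} {G : SimpleGraph V}
    {H : SimpleGraph W} (e : G ≃g H) :
    strongOddChromaticNumber G = strongOddChromaticNumber H := by
  unfold strongOddChromaticNumber
  congr 1
  ext k
  exact ⟨fun ⟨φ, hφ⟩ => ⟨φ ∘ e.symm, isStrongOddColoring_comp_iso e.symm hφ⟩,
         fun ⟨φ, hφ⟩ => ⟨φ ∘ e, isStrongOddColoring_comp_iso e hφ⟩⟩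

/-- For every finite simple graph `G` there is a finite simple graph `H` containing `G`
as an induced subgraph with `χ_so(H) = χ(G)`. -/
theorem stmt_19 {V : Type*} [Fintype V] (G : SimpleGraph V) :
    ∃ (k : ℕ) (H : SimpleGraph (Fin k)) (_ : G ↪g H),
      (strongOddChromaticNumber H : ℕ∞) = G.chromaticNumber := by
  classical
  set n := (G.chromaticNumber).toNat with hn
  obtain ⟨φ⟩ := G.colorable_chromaticNumber_of_fintype
  have hne : G.chromaticNumber ≠ ⊤ :=
    ne_top_of_le_ne_top (by simp) G.colorable_of_fintype.chromaticNumber_le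
  have hχ : G.chromaticNumber = (n : ℕ∞) := (ENat.coe_toNat hne).symm
  -- the parity-defect predicate
  set P : V × Fin n → Prop := fun p =>
    {u : V | G.Adj p.1 u ∧ φ u = p.2}.ncard ≠ 0 ∧
      Even {u : V | G.Adj p.1 u ∧ φ u = p.2}.ncard with hP
  -- the auxiliary graph H' on V ⊕ {p // P p}
  let S := {p : V × Fin n // P p}
  let H' : SimpleGraph (V ⊕ S) :=
    { Adj := fun x y =>
        match x, y with
        | Sum.inl a, Sum.inl b => G.Adj a b
        | Sum.inl a, Sum.inr s => s.1.1 = a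
        | Sum.inr s, Sum.inl a => s.1.1 = a
        | Sum.inr _, Sum.inr _ => False
      symm := ⟨by rintro (a | a) (b | b) h <;> first | exact h.symm | exact h | exact h.elim⟩
      loopless := ⟨by rintro (a | a) h
                      · exact G.irrefl h
                      · exact h.elim⟩ }
  have hadj_ll : ∀ a b : V, H'.Adj (Sum.inl a) (Sum.inl b) ↔ G.Adj a b := fun _ _ => Iff.rfl
  have hadj_lr : ∀ (a : V) (s : S), H'.Adj (Sum.inl a) (Sum.inr s) ↔ s.1.1 = a :=
    fun _ _ => Iff.rfl
  have hadj_rl : ∀ (s : S) (a : V), H'.Adj (Sum.inr s) (Sum.inl a) ↔ s.1.1 = a :=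
    fun _ _ => Iff.rfl
  have hadj_rr : ∀ s t : S, ¬ H'.Adj (Sum.inr s) (Sum.inr t) := fun _ _ h => h
  -- key: for s : S, the color s.1.2 differs from the color of s.1.1
  have hkey : ∀ s : S, φ s.1.1 ≠ s.1.2 := by
    intro s hc
    obtain ⟨hnz, _⟩ := s.2
    have hfin : {u : V | G.Adj s.1.1 u ∧ φ u = s.1.2}.Finite := Set.toFinite _
    obtain ⟨u, hu⟩ := Set.nonempty_of_ncard_ne_zero hnz
    exact φ.valid hu.1 (hc.trans hu.2.symm)
  -- the coloring of H'
  let ψ : V ⊕ S → Fin n := Sum.elim φ (fun s => s.1.2)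
  have hψ : IsStrongOddColoring H' ψ := by
    constructor
    · rintro (a | a) (b | b) h
      · exact φ.valid h
      · rcases h with rfl
        exact fun hc => hkey b (by simpa [ψ] using hc)
      · rcases h with rfl
        exact fun hc => hkey a (by simpa [ψ] using hc.symm)
      · exact h.elim
    · rintro (v | s) c
      · -- the neighbourhood splits as an image of A and of B
        have hsplit : {u : V ⊕ S | H'.Adj (Sum.inl v) u ∧ ψ u = c}
            = Sum.inl '' {u : V | G.Adj v u ∧ φ u = c}
              ∪ Sum.inr '' {s : S | s.1 = (v, c)} := by
          ext (u | s)
          · simp [ψ]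
            exact fun _ => Iff.rfl
          · constructor
            · rintro ⟨h1, h2⟩
              refine Or.inr ⟨s, ?_, rfl⟩
              have : s.1.1 = v := h1
              simp only [Set.mem_setOf_eq]
              exact Prod.ext this h2
            · rintro (⟨u, _, h⟩ | ⟨t, ht, h⟩)
              · exact absurd h (by simp)
              · obtain rfl : t = s := by simpa using h
                exact ⟨congrArg Prod.fst ht, congrArg Prod.snd ht⟩
        have hcard : {u : V ⊕ S | H'.Adj (Sum.inl v) u ∧ ψ u = c}.ncard
            = {u : V | G.Adj v u ∧ φ u = c}.ncard + {s : S | s.1 = (v, c)}.ncard := by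
          rw [hsplit, Set.ncard_union_eq (by
              simp [Set.disjoint_left]) (Set.toFinite _) (Set.toFinite _),
            Set.ncard_image_of_injective _ Sum.inl_injective,
            Set.ncard_image_of_injective _ Sum.inr_injective]
        by_cases hp : P (v, c)
        · have hB : {s : S | s.1 = (v, c)} = {(⟨(v, c), hp⟩ : S)} := by
            ext t
            simp only [Set.mem_setOf_eq, Set.mem_singleton_iff]
            exact ⟨fun h => Subtype.ext h, fun h => congrArg Subtype.val h⟩
          rw [hcard, hB, Set.ncard_singleton]
          exact Or.inr (hp.2.add_one)
        · have hB : {s : S | s.1 = (v, c)} = ∅ := by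
            ext t
            simp only [Set.mem_setOf_eq, Set.mem_empty_iff_false, iff_false]
            intro h
            exact hp (h ▸ t.2)
          rw [hcard, hB, Set.ncard_empty, Nat.add_zero]
          rw [hP] at hp
          simp only [not_and_or, not_not] at hp
          rcases hp with h | h
          · exact Or.inl h
          · exact Or.inr (Nat.not_even_iff_odd.mp h)
      · by_cases hc : φ s.1.1 = c
        · have : {u : V ⊕ S | H'.Adj (Sum.inr s) u ∧ ψ u = c} = {Sum.inl s.1.1} := by
            ext (u | t)
            · constructor
              · rintro ⟨h1, _⟩
                exact congrArg Sum.inl (Eq.symm (h1 : s.1.1 = u))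
              · rintro h
                obtain rfl : s.1.1 = u := by simpa using h.symm
                exact ⟨rfl, hc⟩
            · simp [hadj_rr]
          rw [this, Set.ncard_singleton]
          exact Or.inr odd_one
        · have : {u : V ⊕ S | H'.Adj (Sum.inr s) u ∧ ψ u = c} = ∅ := by
            ext (u | t)
            · constructor
              · rintro ⟨h1, h2⟩
                obtain rfl : s.1.1 = u := h1
                exact hc h2
              · simp
            · simp [hadj_rr]
          rw [this, Set.ncard_empty]
          exact Or.inl rfl
  -- transport to Fin k
  obtain ⟨k, ⟨e⟩⟩ := Finite.exists_equiv_fin (V ⊕ S)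
  refine ⟨k, H'.comap e.symm, ?_, ?_⟩
  · exact (SimpleGraph.Iso.comap (e.symm : Fin k ≃ (V ⊕ S)) H').symm.toEmbedding.comp
      ⟨⟨Sum.inl, Sum.inl_injective⟩, fun {a b} => Iff.rfl⟩
  · have hiso : strongOddChromaticNumber (H'.comap (e.symm : Fin k → V ⊕ S))
        = strongOddChromaticNumber H' :=
      strongOddChromaticNumber_eq_of_iso (SimpleGraph.Iso.comap (e.symm) H')
    rw [hiso, hχ]
    have hle : strongOddChromaticNumber H' ≤ n := Nat.sInf_le ⟨ψ, hψ⟩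
    have hmem : strongOddChromaticNumber H' ∈
        {k : ℕ | ∃ φ : V ⊕ S → Fin k, IsStrongOddColoring H' φ} :=
      Nat.sInf_mem ⟨n, ψ, hψ⟩
    obtain ⟨χ0, hχ0⟩ := hmem
    have hcol : G.Colorable (strongOddChromaticNumber H') :=
      ⟨SimpleGraph.Coloring.mk (fun v => χ0 (Sum.inl v))
        (fun {u v} h => hχ0.1 (Sum.inl u) (Sum.inl v) h)⟩
    have hge : (n : ℕ∞) ≤ (strongOddChromaticNumber H' : ℕ∞) := by
      rw [← hχ]
      exact hcol.chromaticNumber_le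
    exact_mod_cast le_antisymm (by exact_mod_cast hle) hge
end
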